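/- arXiv:1107.4989 — 11 statements merged into one kernel-verified Lean document; each statement's English description precedes it below -/
import Mathlib

section
/- The function f : ℝⁿ → ℝ defined by f(x₁,…,xₙ) = Σᵢ (-1)^(i-1) xᵢ, for odd n ≥ 3, is associative: for each i = 1,…,n-1, f(x₁,…,x_{i-1}, f(x_i,…,x_{i+n-1}), x_{i+n},…,x_{2n-1}) = f(x₁,…,x_i, f(x_{i+1},…,x_{i+n}), x_{i+n+1},…,x_{2n-1}) for all reals. -/
lemma aux_key (n i : ℕ) (hn : 1 ≤ n) (hodd : Odd n) (hi : i < n) (x : ℕ → ℝ) :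
    (∑ j ∈ Finset.Ico 0 n, (-1:ℝ)^j *
      (if j < i then x j
        else if j = i then ∑ l ∈ Finset.Ico 0 n, (-1:ℝ)^l * x (i + l)
        else x (j + n - 1))) =
    ∑ k ∈ Finset.Ico 0 (2*n-1), (-1:ℝ)^k * x k := by
  rw [← Finset.sum_Ico_consecutive _ (Nat.zero_le i) (le_of_lt hi),
    ← Finset.sum_Ico_consecutive _ (Nat.zero_le i) (show i ≤ 2*n-1 by omega),
    ← Finset.sum_Ico_consecutive _ (show i ≤ i + n by omega) (show i + n ≤ 2*n-1 by omega),
    Finset.sum_eq_sum_Ico_succ_bot hi]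
  have h1 : ∑ j ∈ Finset.Ico 0 i, (-1:ℝ)^j *
      (if j < i then x j
        else if j = i then ∑ l ∈ Finset.Ico 0 n, (-1:ℝ)^l * x (i + l)
        else x (j + n - 1)) = ∑ j ∈ Finset.Ico 0 i, (-1:ℝ)^j * x j := by
    apply Finset.sum_congr rfl
    intro j hj
    simp only [Finset.mem_Ico] at hj
    rw [if_pos hj.2]
  have h2 : (-1:ℝ)^i *
      (if i < i then x i
        else if i = i then ∑ l ∈ Finset.Ico 0 n, (-1:ℝ)^l * x (i + l)
        else x (i + n - 1)) = ∑ k ∈ Finset.Ico i (i+n), (-1:ℝ)^k * x k := by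
    rw [if_neg (lt_irrefl i), if_pos rfl, Finset.sum_Ico_eq_sum_range,
      Finset.sum_Ico_eq_sum_range]
    simp only [Nat.sub_zero, Nat.zero_add, Nat.add_sub_cancel_left, Finset.mul_sum]
    exact Finset.sum_congr rfl fun l _ => by rw [pow_add]; ring
  have h3 : ∑ j ∈ Finset.Ico (i+1) n, (-1:ℝ)^j *
      (if j < i then x j
        else if j = i then ∑ l ∈ Finset.Ico 0 n, (-1:ℝ)^l * x (i + l)
        else x (j + n - 1)) = ∑ k ∈ Finset.Ico (i+n) (2*n-1), (-1:ℝ)^k * x k := by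
    have he : ∀ j ∈ Finset.Ico (i+1) n, (-1:ℝ)^j *
        (if j < i then x j
          else if j = i then ∑ l ∈ Finset.Ico 0 n, (-1:ℝ)^l * x (i + l)
          else x (j + n - 1)) = (-1:ℝ)^j * x (j + n - 1) := by
      intro j hj
      simp only [Finset.mem_Ico] at hj
      rw [if_neg (by omega), if_neg (by omega)]
    rw [Finset.sum_congr rfl he, Finset.sum_Ico_eq_sum_range, Finset.sum_Ico_eq_sum_range]
    rw [show 2*n-1-(i+n) = n - (i+1) by omega]
    apply Finset.sum_congr rfl
    intro m _
    rw [show i + 1 + m + n - 1 = i + n + m by omega]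
    rw [pow_add, pow_add, pow_add, pow_add, hodd.neg_one_pow]
    ring
  rw [h1, h2, h3]

/-- For odd `n ≥ 3`, the alternating sum `f(x₁,…,xₙ) = ∑ (-1)^(i-1) xᵢ` on `ℝⁿ` is
associative: substituting `f` at consecutive position `i` or `i+1` of a `(2n-1)`-tuple
gives the same result, for each `i = 1, …, n-1`. -/
theorem stmt_0 (n : ℕ) (hn : 3 ≤ n) (hodd : Odd n)
    (f : (Fin n → ℝ) → ℝ)
    (hf : ∀ x : Fin n → ℝ, f x = ∑ i : Fin n, (-1 : ℝ) ^ (i : ℕ) * x i) :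
    ∀ x : ℕ → ℝ, ∀ i : ℕ, i + 1 < n →
      f (fun j : Fin n => if (j : ℕ) < i then x j
          else if (j : ℕ) = i then f (fun l : Fin n => x (i + (l : ℕ)))
          else x ((j : ℕ) + n - 1)) =
      f (fun j : Fin n => if (j : ℕ) < i + 1 then x j
          else if (j : ℕ) = i + 1 then f (fun l : Fin n => x (i + 1 + (l : ℕ)))
          else x ((j : ℕ) + n - 1)) := by
  intro x i hi
  simp only [hf]
  have conv : ∀ k : ℕ, (∑ j : Fin n, (-1:ℝ)^(j:ℕ) *
      (if (j:ℕ) < k then x (j:ℕ)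
        else if (j:ℕ) = k then (∑ l : Fin n, (-1:ℝ)^(l:ℕ) * x (k + (l:ℕ)))
        else x ((j:ℕ)+n-1))) =
      ∑ j ∈ Finset.Ico 0 n, (-1:ℝ)^j *
      (if j < k then x j
        else if j = k then (∑ l ∈ Finset.Ico 0 n, (-1:ℝ)^l * x (k + l))
        else x (j+n-1)) := by
    intro k
    have hin := Fin.sum_univ_eq_sum_range (fun l => (-1:ℝ)^l * x (k + l)) n
    simp only [hin]
    rw [Fin.sum_univ_eq_sum_range (fun m => (-1:ℝ)^m *
      (if m < k then x m
        else if m = k then ∑ l ∈ Finset.range n, (-1:ℝ)^l * x (k+l)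
        else x (m+n-1))) n]
    simp only [Finset.range_eq_Ico]
  rw [conv i, conv (i+1), aux_key n i (by omega) hodd (by omega) x,
    aux_key n (i+1) (by omega) hodd (by omega) x]
end

section
/- Let I be a nontrivial real interval and f : Iⁿ → I continuous, symmetric, cancellative, and associative. Then f is strictly increasing in each variable. -/
/-- `f : Iⁿ → I` is associative in the `n`-ary sense: for each `i` with `i+1 < n`,
substituting `f` into positions `i` or `i+1` of a `(2n-1)`-tuple over `I` gives
the same result. -/
def NAssocOn (n : ℕ) (I : Set ℝ) (f : (Fin n → ℝ) → ℝ) : Prop :=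
  ∀ x : ℕ → ℝ, (∀ j, j < 2 * n - 1 → x j ∈ I) → ∀ i : ℕ, i + 1 < n →
    f (fun j : Fin n => if (j : ℕ) < i then x j
        else if (j : ℕ) = i then f (fun l : Fin n => x (i + (l : ℕ)))
        else x ((j : ℕ) + n - 1)) =
    f (fun j : Fin n => if (j : ℕ) < i + 1 then x j
        else if (j : ℕ) = i + 1 then f (fun l : Fin n => x (i + 1 + (l : ℕ)))
        else x ((j : ℕ) + n - 1))

/-- `f` is symmetric on `Iⁿ`: invariant under all permutations of its arguments. -/
def SymmOn (n : ℕ) (I : Set ℝ) (f : (Fin n → ℝ) → ℝ) : Prop :=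
  ∀ x : Fin n → ℝ, (∀ i, x i ∈ I) → ∀ σ : Equiv.Perm (Fin n), f (x ∘ σ) = f x

/-- `f` is cancellative on `Iⁿ`: one-to-one in each variable. -/
def CancOn (n : ℕ) (I : Set ℝ) (f : (Fin n → ℝ) → ℝ) : Prop :=
  ∀ k : Fin n, ∀ x x' : Fin n → ℝ, (∀ i, x i ∈ I) → (∀ i, x' i ∈ I) →
    (∀ i, i ≠ k → x i = x' i) → f x = f x' → x k = x' k

/-- Claim 1: a continuous, symmetric, cancellative, associative `f : Iⁿ → I` on a
nontrivial real interval `I` is strictly increasing in each variable. -/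
theorem stmt_3 (n : ℕ) (hn : 2 ≤ n) (I : Set ℝ) (hI : I.OrdConnected)
    (hne : ∃ a ∈ I, ∃ b ∈ I, a ≠ b)
    (f : (Fin n → ℝ) → ℝ)
    (hmap : ∀ x : Fin n → ℝ, (∀ i, x i ∈ I) → f x ∈ I)
    (hcont : ContinuousOn f {x | ∀ i, x i ∈ I})
    (hsym : SymmOn n I f) (hcanc : CancOn n I f) (hassoc : NAssocOn n I f) :
    ∀ k : Fin n, ∀ x : Fin n → ℝ, (∀ i, x i ∈ I) →
      ∀ a b : ℝ, a ∈ I → b ∈ I → a < b →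
        f (Function.update x k a) < f (Function.update x k b) := by
  classical
  obtain ⟨a', ha', b', hb', hab'⟩ := hne
  set a0 : ℝ := min a' b' with ha0def
  set b0 : ℝ := max a' b' with hb0def
  have ha0 : a0 ∈ I := by rcases min_choice a' b' with h | h <;> rw [ha0def, h] <;> assumption
  have hb0 : b0 ∈ I := by rcases max_choice a' b' with h | h <;> rw [hb0def, h] <;> assumption
  have hab0 : a0 < b0 := min_lt_max.2 hab'
  have hIc : Convex ℝ I := hI.convex
  -- membership of updates
  have hmem : ∀ (k : Fin n) (y : Fin n → ℝ), (∀ i, y i ∈ I) → ∀ t, t ∈ I →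
      ∀ i, Function.update y k t i ∈ I := by
    intro k y hy t ht i
    rcases eq_or_ne i k with h | h
    · rw [h, Function.update_self]; exact ht
    · rw [Function.update_of_ne h]; exact hy i
  -- the parameter set
  set Q : Set ((Fin n → ℝ) × ℝ × ℝ) :=
      {p | (∀ i, p.1 i ∈ I) ∧ p.2.1 ∈ I ∧ p.2.2 ∈ I ∧ p.2.1 < p.2.2} with hQdef
  have hQconv : Convex ℝ Q := by
    rintro p ⟨hp1, hp21, hp22, hplt⟩ q ⟨hq1, hq21, hq22, hqlt⟩ s t hs ht hst
    refine ⟨fun i => ?_, ?_, ?_, ?_⟩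
    · have := hIc (hp1 i) (hq1 i) hs ht hst
      simpa using this
    · have := hIc hp21 hq21 hs ht hst
      simpa using this
    · have := hIc hp22 hq22 hs ht hst
      simpa using this
    · show (s • p + t • q).2.1 < (s • p + t • q).2.2
      simp only [Prod.snd_add, Prod.smul_snd, Prod.fst_add, Prod.smul_fst, smul_eq_mul]
      rcases hs.lt_or_eq with h | h
      · nlinarith [mul_le_mul_of_nonneg_left hqlt.le ht]
      · have : t = 1 := by linarith
        rw [← h, this]; simpa using hqlt
  have hQpre : IsPreconnected Q := hQconv.isPreconnected
  -- nonvanishing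
  have hne0 : ∀ (k : Fin n), ∀ p ∈ Q,
      f (Function.update p.1 k p.2.1) ≠ f (Function.update p.1 k p.2.2) := by
    rintro k p ⟨hp1, hp21, hp22, hplt⟩ heq
    have := hcanc k _ _ (hmem k p.1 hp1 p.2.1 hp21) (hmem k p.1 hp1 p.2.2 hp22)
      (fun i hik => by rw [Function.update_of_ne hik, Function.update_of_ne hik]) heq
    rw [Function.update_self, Function.update_self] at this
    exact absurd this hplt.ne
  -- continuity of the gap function
  have hucont : ∀ (k : Fin n), Continuous
      (fun p : ((Fin n → ℝ) × ℝ × ℝ) × ℝ => Function.update p.1.1 k p.2) := by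
    intro k
    apply continuous_pi
    intro i
    simp only [Function.update_apply]
    by_cases h : i = k
    · simp only [if_pos h]; exact continuous_snd
    · simp only [if_neg h]; exact (continuous_apply i).comp (continuous_fst.fst)
  have hgapcont : ∀ (k : Fin n), ContinuousOn
      (fun p : (Fin n → ℝ) × ℝ × ℝ =>
        f (Function.update p.1 k p.2.2) - f (Function.update p.1 k p.2.1)) Q := by
    intro k
    have c2 : Continuous (fun p : (Fin n → ℝ) × ℝ × ℝ => Function.update p.1 k p.2.2) :=
      (hucont k).comp (continuous_id.prodMk continuous_snd.snd)
    have c1 : Continuous (fun p : (Fin n → ℝ) × ℝ × ℝ => Function.update p.1 k p.2.1) :=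
      (hucont k).comp (continuous_id.prodMk continuous_snd.fst)
    have m2 : Set.MapsTo (fun p : (Fin n → ℝ) × ℝ × ℝ => Function.update p.1 k p.2.2) Q
        {x | ∀ i, x i ∈ I} := fun p hp i => hmem k p.1 hp.1 p.2.2 hp.2.2.1 i
    have m1 : Set.MapsTo (fun p : (Fin n → ℝ) × ℝ × ℝ => Function.update p.1 k p.2.1) Q
        {x | ∀ i, x i ∈ I} := fun p hp i => hmem k p.1 hp.1 p.2.1 hp.2.1 i
    exact (hcont.comp c2.continuousOn m2).sub (hcont.comp c1.continuousOn m1)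
  -- sign is constant on Q for each k
  have hsame : ∀ (k : Fin n), ∀ p ∈ Q, ∀ q ∈ Q,
      f (Function.update p.1 k p.2.1) < f (Function.update p.1 k p.2.2) →
      f (Function.update q.1 k q.2.1) < f (Function.update q.1 k q.2.2) := by
    intro k p hp q hq hppos
    by_contra hno
    have hqneg : f (Function.update q.1 k q.2.2) < f (Function.update q.1 k q.2.1) :=
      lt_of_le_of_ne (not_lt.1 hno) (fun h => hne0 k q hq h.symm)
    have hiv := hQpre.intermediate_value hq hp (hgapcont k)
    have h0 : (0 : ℝ) ∈ Set.Icc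
        (f (Function.update q.1 k q.2.2) - f (Function.update q.1 k q.2.1))
        (f (Function.update p.1 k p.2.2) - f (Function.update p.1 k p.2.1)) :=
      ⟨by linarith, by linarith⟩
    obtain ⟨r, hr, hr0⟩ := hiv h0
    exact hne0 k r hr (by dsimp only at hr0; linarith)
  -- symmetry transfer at constant base point
  have hswapf : ∀ (k k' : Fin n) (t : ℝ), t ∈ I →
      f (Function.update (fun _ : Fin n => a0) k t) =
      f (Function.update (fun _ : Fin n => a0) k' t) := by
    intro k k' t ht
    rcases eq_or_ne k k' with hkk | hkk
    · rw [hkk]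
    have hx : ∀ i, Function.update (fun _ : Fin n => a0) k' t i ∈ I :=
      hmem k' _ (fun _ => ha0) t ht
    have hsy := hsym (Function.update (fun _ : Fin n => a0) k' t) hx (Equiv.swap k k')
    have hc : (Function.update (fun _ : Fin n => a0) k' t) ∘ (Equiv.swap k k') =
        Function.update (fun _ : Fin n => a0) k t := by
      funext i
      simp only [Function.comp_apply, Function.update_apply]
      by_cases h1 : i = k
      · subst h1; simp [Equiv.swap_apply_left]
      · by_cases h2 : i = k'
        · subst h2; simp [Equiv.swap_apply_right, hkk, Ne.symm hkk]
        · simp [Equiv.swap_apply_of_ne_of_ne h1 h2, h1, h2]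
    rw [hc] at hsy
    exact hsy
  have h0n : 0 < n := by omega
  set k0 : Fin n := ⟨0, h0n⟩ with hk0def
  have hp0Q : ((fun _ : Fin n => a0), a0, b0) ∈ Q := ⟨fun _ => ha0, ha0, hb0, hab0⟩
  -- global dichotomy
  have dich : (∀ (k : Fin n), ∀ p ∈ Q,
        f (Function.update p.1 k p.2.1) < f (Function.update p.1 k p.2.2)) ∨
      (∀ (k : Fin n), ∀ p ∈ Q,
        f (Function.update p.1 k p.2.2) < f (Function.update p.1 k p.2.1)) := by
    rcases lt_trichotomy (f (Function.update (fun _ : Fin n => a0) k0 a0))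
        (f (Function.update (fun _ : Fin n => a0) k0 b0)) with h | h | h
    · left
      intro k p hp
      refine hsame k ((fun _ : Fin n => a0), a0, b0) hp0Q p hp ?_
      show f (Function.update (fun _ : Fin n => a0) k a0) <
        f (Function.update (fun _ : Fin n => a0) k b0)
      rw [← hswapf k0 k a0 ha0, ← hswapf k0 k b0 hb0]
      exact h
    · exact absurd h (hne0 k0 _ hp0Q)
    · right
      intro k p hp
      by_contra hno
      have hlt : f (Function.update p.1 k p.2.1) < f (Function.update p.1 k p.2.2) :=
        lt_of_le_of_ne (not_lt.1 hno) (hne0 k p hp)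
      have := hsame k p hp ((fun _ : Fin n => a0), a0, b0) hp0Q hlt
      have h2 : f (Function.update (fun _ : Fin n => a0) k0 a0) <
          f (Function.update (fun _ : Fin n => a0) k0 b0) := by
        rw [hswapf k0 k a0 ha0, hswapf k0 k b0 hb0]
        exact this
      linarith
  rcases dich with hpos | hneg
  · intro k x hx a b ha hb hab
    exact hpos k (x, a, b) ⟨hx, ha, hb, hab⟩
  -- decreasing case: contradiction with associativity
  exfalso
  have h1n : 1 < n := by omega
  set k1 : Fin n := ⟨1, h1n⟩ with hk1def
  have hk01 : k0 ≠ k1 := by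
    intro h
    have := congrArg Fin.val h
    rw [hk0def, hk1def] at this
    simp at this
  -- d = f(a0,...,a0)
  set d : ℝ := f (fun _ : Fin n => a0) with hddef
  have hd : d ∈ I := hmap _ (fun _ => ha0)
  -- gg t = f(t, a0, ..., a0)
  set gg : ℝ → ℝ := fun t => f (Function.update (fun _ : Fin n => a0) k0 t) with hggdef
  have hggmem : ∀ t, t ∈ I → gg t ∈ I := fun t ht =>
    hmap _ (hmem k0 _ (fun _ => ha0) t ht)
  -- the key associativity identity
  have key : ∀ t, t ∈ I →
      f (Function.update (fun _ : Fin n => a0) k0 (gg t)) =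
      f (Function.update (Function.update (fun _ : Fin n => a0) k1 d) k0 t) := by
    intro t ht
    set x : ℕ → ℝ := fun m => if m = 0 then t else a0 with hxdef
    have hx : ∀ j, j < 2 * n - 1 → x j ∈ I := by
      intro j _
      rw [hxdef]
      dsimp only
      split
      · exact ht
      · exact ha0
    have e1 : Function.update (fun _ : Fin n => a0) k0 (gg t) =
        (fun j : Fin n => if (j : ℕ) < 0 then x j
          else if (j : ℕ) = 0 then f (fun l : Fin n => x (0 + (l : ℕ)))
          else x ((j : ℕ) + n - 1)) := by
      funext j
      rw [if_neg (Nat.not_lt_zero _)]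
      by_cases hj : (j : ℕ) = 0
      · have hjk : j = k0 := by rw [hk0def]; exact Fin.ext hj
        rw [if_pos hj, hjk, Function.update_self]
        rw [hggdef]
        dsimp only
        congr 1
        funext l
        rw [Function.update_apply, hxdef]
        dsimp only
        rw [Nat.zero_add]
        by_cases hl : l = k0
        · rw [if_pos hl, if_pos (by rw [hl, hk0def])]
        · rw [if_neg hl, if_neg (fun h => hl (by rw [hk0def]; exact Fin.ext h))]
      · rw [if_neg hj]
        have hjk : j ≠ k0 := fun h => hj (by rw [h, hk0def])
        rw [Function.update_of_ne hjk, hxdef]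
        dsimp only
        rw [if_neg (by omega)]
    have e2 : Function.update (Function.update (fun _ : Fin n => a0) k1 d) k0 t =
        (fun j : Fin n => if (j : ℕ) < 0 + 1 then x j
          else if (j : ℕ) = 0 + 1 then f (fun l : Fin n => x (0 + 1 + (l : ℕ)))
          else x ((j : ℕ) + n - 1)) := by
      funext j
      by_cases hj0 : (j : ℕ) = 0
      · have hjk : j = k0 := by rw [hk0def]; exact Fin.ext hj0
        rw [if_pos (by omega), hjk, Function.update_self]
        simp [hxdef, hk0def]
      · have hjk0 : j ≠ k0 := fun h => hj0 (by rw [h, hk0def])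
        rw [Function.update_of_ne hjk0, if_neg (by omega)]
        by_cases hj1 : (j : ℕ) = 1
        · have hjk : j = k1 := by rw [hk1def]; exact Fin.ext hj1
          rw [if_pos hj1, hjk, Function.update_self, hddef]
          congr 1
          funext l
          rw [hxdef]
          dsimp only
          rw [if_neg (by omega)]
        · have hjk1 : j ≠ k1 := fun h => hj1 (by rw [h, hk1def])
          rw [if_neg hj1, Function.update_of_ne hjk1, hxdef]
          dsimp only
          rw [if_neg (by omega)]
    rw [e1, e2]
    exact hassoc x hx 0 (by omega)
  -- now derive the contradiction
  have huv : gg b0 < gg a0 :=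
    hneg k0 ((fun _ : Fin n => a0), a0, b0) hp0Q
  have hu : gg b0 ∈ I := hggmem b0 hb0
  have hv : gg a0 ∈ I := hggmem a0 ha0
  have step1 : f (Function.update (fun _ : Fin n => a0) k0 (gg a0)) <
      f (Function.update (fun _ : Fin n => a0) k0 (gg b0)) :=
    hneg k0 ((fun _ : Fin n => a0), gg b0, gg a0) ⟨fun _ => ha0, hu, hv, huv⟩
  have hy1 : ∀ i, Function.update (fun _ : Fin n => a0) k1 d i ∈ I :=
    hmem k1 _ (fun _ => ha0) d hd
  have step2 : f (Function.update (Function.update (fun _ : Fin n => a0) k1 d) k0 b0) <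
      f (Function.update (Function.update (fun _ : Fin n => a0) k1 d) k0 a0) :=
    hneg k0 ((Function.update (fun _ : Fin n => a0) k1 d), a0, b0) ⟨hy1, ha0, hb0, hab0⟩
  have e3 := key a0 ha0
  have e4 := key b0 hb0
  linarith
end

section
/- Let I be a nontrivial real interval and f : Iⁿ → I continuous, symmetric, cancellative, and associative. Then f has at most one idempotent: if f(d,…,d) = d and f(e,…,e) = e with d, e ∈ I, then d = e. -/
/-- An idempotent is an `n`-ary identity. -/
lemma ident_aux (n : ℕ) (hn : 2 ≤ n) (I : Set ℝ) (f : (Fin n → ℝ) → ℝ)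
    (hmap : ∀ x : Fin n → ℝ, (∀ i, x i ∈ I) → f x ∈ I)
    (hcanc : CancOn n I f) (hassoc : NAssocOn n I f)
    (u : ℝ) (hu : u ∈ I) (huid : f (fun _ => u) = u)
    (t : ℝ) (ht : t ∈ I) :
    f (fun j : Fin n => if (j : ℕ) = 0 then t else u) = t := by
  haveI : NeZero n := ⟨by omega⟩
  set x : ℕ → ℝ := fun k => if k = 0 then t else u with hxdef
  have hxI : ∀ j, j < 2 * n - 1 → x j ∈ I := by
    intro j _; simp only [hxdef]; split <;> assumption
  have H := hassoc x hxI 0 (by omega)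
  set h : ℝ → ℝ := fun s => f (fun j : Fin n => if (j : ℕ) = 0 then s else u) with hhdef
  have hmem : ∀ s, s ∈ I → ∀ i : Fin n, (if (i : ℕ) = 0 then s else u) ∈ I := by
    intro s hs i; split <;> assumption
  have hhI : ∀ s ∈ I, h s ∈ I := fun s hs => hmap _ (hmem s hs)
  have hL : (fun j : Fin n => if (j : ℕ) < 0 then x j
        else if (j : ℕ) = 0 then f (fun l : Fin n => x (0 + (l : ℕ)))
        else x ((j : ℕ) + n - 1)) = fun j : Fin n => if (j : ℕ) = 0 then h t else u := by
    funext j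
    rcases eq_or_ne (j : ℕ) 0 with hj | hj
    · have : (fun l : Fin n => x (0 + (l : ℕ))) = fun l : Fin n => if (l : ℕ) = 0 then t else u := by
        funext l; simp [hxdef]
      simp [hj, this, hhdef, hxdef]
    · have h1 : ¬ ((j : ℕ) < 0) := by omega
      have h2 : (j : ℕ) + n - 1 ≠ 0 := by omega
      simp [hj, h1, h2, hxdef]
  have hR : (fun j : Fin n => if (j : ℕ) < 0 + 1 then x j
        else if (j : ℕ) = 0 + 1 then f (fun l : Fin n => x (0 + 1 + (l : ℕ)))
        else x ((j : ℕ) + n - 1)) = fun j : Fin n => if (j : ℕ) = 0 then t else u := by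
    funext j
    rcases eq_or_ne (j : ℕ) 0 with hj | hj
    · simp [hj, hxdef]
    · have h1 : ¬ ((j : ℕ) < 0 + 1) := by omega
      rcases eq_or_ne (j : ℕ) (0 + 1) with hj1 | hj1
      · have : (fun l : Fin n => x (0 + 1 + (l : ℕ))) = fun _ : Fin n => u := by
          funext l; have : 0 + 1 + (l : ℕ) ≠ 0 := by omega
          simp [hxdef, this]
        simp [hj, hj1, h1, this, huid]
      · have h2 : (j : ℕ) + n - 1 ≠ 0 := by omega
        simp [hj, hj1, h1, h2, hxdef]
  rw [hL, hR] at H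
  -- H : h (h t) = h t  (as f applied to the two functions)
  have key := hcanc 0 (fun j : Fin n => if (j : ℕ) = 0 then h t else u)
      (fun j : Fin n => if (j : ℕ) = 0 then t else u)
      (hmem _ (hhI t ht)) (hmem _ ht)
      (by intro i hi
          have : (i : ℕ) ≠ 0 := by intro h0; apply hi; ext; simp [h0]
          simp [this])
      H
  simpa [hhdef] using key

/-- No two idempotents `d < e`. -/
lemma key_aux (n : ℕ) (hn : 2 ≤ n) (I : Set ℝ) (hI : I.OrdConnected)
    (f : (Fin n → ℝ) → ℝ)
    (hmap : ∀ x : Fin n → ℝ, (∀ i, x i ∈ I) → f x ∈ I)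
    (hcont : ContinuousOn f {x | ∀ i, x i ∈ I})
    (hsym : SymmOn n I f) (hcanc : CancOn n I f) (hassoc : NAssocOn n I f)
    (d : ℝ) (hd : d ∈ I) (e : ℝ) (he : e ∈ I)
    (hdi : f (fun _ => d) = d) (hei : f (fun _ => e) = e)
    (hlt : d < e) : False := by
  haveI : NeZero n := ⟨by omega⟩
  set S : Set (Fin n → ℝ) := {x | ∀ i, x i ∈ I} with hSdef
  set A : (Fin n → ℝ) → ℝ → (Fin n → ℝ) := fun p s j => if j = 0 then s else p j with hAdef
  set D : (Fin n → ℝ) → ℝ := fun p => f (A p e) - f (A p d) with hDdef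
  have hA : ∀ p ∈ S, ∀ s ∈ I, A p s ∈ S := by
    intro p hp s hs j
    simp only [hAdef]
    split
    · exact hs
    · exact hp j
  -- connectedness of S
  have hconn : IsPreconnected S := by
    have hc : Convex ℝ S := by
      have hIc : Convex ℝ I := hI.convex
      have : S = Set.pi Set.univ (fun _ : Fin n => I) := by
        ext x; simp [hSdef, Set.mem_pi]
      rw [this]
      exact convex_pi fun i _ => hIc
    exact hc.isPreconnected
  -- continuity of D on S
  have hDcont : ContinuousOn D S := by
    have hAc : ∀ s : ℝ, Continuous fun p : Fin n → ℝ => A p s := by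
      intro s
      apply continuous_pi
      intro j
      rcases eq_or_ne j 0 with hj | hj
      · simpa [hAdef, hj] using continuous_const
      · simpa [hAdef, hj] using continuous_apply j
    have h1 : ContinuousOn (fun p => f (A p e)) S :=
      hcont.comp (hAc e).continuousOn (fun p hp => hA p hp e he)
    have h2 : ContinuousOn (fun p => f (A p d)) S :=
      hcont.comp (hAc d).continuousOn (fun p hp => hA p hp d hd)
    exact h1.sub h2
  -- D never vanishes on S
  have hDne : ∀ p ∈ S, D p ≠ 0 := by
    intro p hp h0
    have heq : f (A p e) = f (A p d) := by
      have := sub_eq_zero.mp h0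
      simpa [hDdef] using this
    have := hcanc 0 (A p e) (A p d) (hA p hp e he) (hA p hp d hd)
      (by intro i hi; simp [hAdef, hi]) heq
    simp only [hAdef, if_pos rfl] at this
    exact absurd this (ne_of_gt hlt)
  -- the chain c i
  set c : ℕ → ℝ := fun i => f (fun j : Fin n => if (j : ℕ) < i then e else d) with hcdef
  have hcmem : ∀ i : ℕ, ∀ j : Fin n, (if (j : ℕ) < i then e else d) ∈ I := by
    intro i j; split <;> assumption
  -- step: c (i+1) - c i = D q for suitable q ∈ S
  have hstep : ∀ i : ℕ, i < n → ∃ q ∈ S, c (i + 1) - c i = D q := by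
    intro i hi
    set m : Fin n := ⟨i, hi⟩ with hmdef
    set σ : Equiv.Perm (Fin n) := Equiv.swap 0 m with hσdef
    set q : Fin n → ℝ := fun j => if (j : ℕ) ≤ i then e else d with hqdef
    have hq : q ∈ S := by intro j; simp only [hqdef]; split <;> assumption
    refine ⟨q, hq, ?_⟩
    have e1 : ((fun j : Fin n => if (j : ℕ) < i + 1 then e else d) ∘ σ) = A q e := by
      funext j
      rcases eq_or_ne j 0 with hj | hj
      · have : σ 0 = m := Equiv.swap_apply_left 0 m
        simp [hj, this, hAdef, hmdef, hσdef]
      · rcases eq_or_ne j m with hjm | hjm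
        · have : σ m = 0 := Equiv.swap_apply_right 0 m
          have hji : (j : ℕ) = i := by rw [hjm]
          simp [hjm, this, hAdef, hqdef, hji, hj, hσdef, hmdef]
        · have : σ j = j := Equiv.swap_apply_of_ne_of_ne hj hjm
          have hji : (j : ℕ) ≠ i := fun h => hjm (Fin.ext (by simp [h, hmdef]))
          have hiff : ((j : ℕ) < i + 1) = ((j : ℕ) ≤ i) := by
            simp [Nat.lt_succ_iff]
          simp only [Function.comp_apply, this, hAdef, hqdef, if_neg hj, hiff]
    have e2 : ((fun j : Fin n => if (j : ℕ) < i then e else d) ∘ σ) = A q d := by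
      funext j
      rcases eq_or_ne j 0 with hj | hj
      · have : σ 0 = m := Equiv.swap_apply_left 0 m
        simp [hj, this, hAdef, hmdef, hσdef]
      · rcases eq_or_ne j m with hjm | hjm
        · have hσm : σ m = 0 := Equiv.swap_apply_right 0 m
          have hji : (j : ℕ) = i := by rw [hjm]
          have hi0 : 0 < i := by
            rcases Nat.eq_zero_or_pos i with h0 | h0
            · exfalso; apply hj; apply Fin.ext; simp [hjm, hmdef, h0]
            · exact h0
          have hm0 : m ≠ 0 := hjm ▸ hj
          simp [hjm, hσm, hAdef, hqdef, hji, hj, hi0, hσdef, hm0, hmdef, hi0.ne']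
        · have : σ j = j := Equiv.swap_apply_of_ne_of_ne hj hjm
          have hji : (j : ℕ) ≠ i := fun h => hjm (Fin.ext (by simp [h, hmdef]))
          have hiff : ((j : ℕ) < i) = ((j : ℕ) ≤ i) := by
            simp only [eq_iff_iff]; omega
          simp only [Function.comp_apply, this, hAdef, hqdef, if_neg hj, hiff]
    have s1 : c (i + 1) = f (A q e) := by
      show f (fun j : Fin n => if (j : ℕ) < i + 1 then e else d) = f (A q e)
      rw [← hsym _ (hcmem (i + 1)) σ, e1]
    have s2 : c i = f (A q d) := by
      show f (fun j : Fin n => if (j : ℕ) < i then e else d) = f (A q d)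
      rw [← hsym _ (hcmem i) σ, e2]
    rw [s1, s2, hDdef]
  -- values of c at 1 and n-1
  have hc1 : c 1 = e := by
    have : (fun j : Fin n => if (j : ℕ) < 1 then e else d)
        = fun j : Fin n => if (j : ℕ) = 0 then e else d := by
      funext j; simp [Nat.lt_one_iff]
    rw [hcdef]; dsimp only; rw [this]
    exact ident_aux n hn I f hmap hcanc hassoc d hd hdi e he
  have hcn1 : c (n - 1) = d := by
    set m : Fin n := ⟨n - 1, by omega⟩ with hmdef
    set σ : Equiv.Perm (Fin n) := Equiv.swap 0 m with hσdef
    have e3 : ((fun j : Fin n => if (j : ℕ) < n - 1 then e else d) ∘ σ)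
        = fun j : Fin n => if (j : ℕ) = 0 then d else e := by
      funext j
      rcases eq_or_ne j 0 with hj | hj
      · have : σ 0 = m := Equiv.swap_apply_left 0 m
        simp [hj, this, hmdef, hσdef]
      · have hj0 : (j : ℕ) ≠ 0 := fun h => hj (Fin.ext (by simp [h]))
        rcases eq_or_ne j m with hjm | hjm
        · have hσm : σ m = 0 := Equiv.swap_apply_right 0 m
          have h0 : (0 : ℕ) < n - 1 := by omega
          have hne1 : n - 1 ≠ 0 := by omega
          simp [hjm, hσm, h0, hj0, hσdef, hmdef, hne1]
        · have : σ j = j := Equiv.swap_apply_of_ne_of_ne hj hjm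
          have hji : (j : ℕ) ≠ n - 1 := fun h => hjm (Fin.ext (by simp [h, hmdef]))
          have hjlt : (j : ℕ) < n - 1 := by
            have := j.isLt; omega
          simp [Function.comp_apply, this, hjlt, hj0]
    have : c (n - 1) = f (fun j : Fin n => if (j : ℕ) = 0 then d else e) := by
      rw [hcdef]; dsimp only
      rw [← hsym _ (hcmem (n - 1)) σ, e3]
    rw [this]
    exact ident_aux n hn I f hmap hcanc hassoc e he hei d hd
  -- sign dichotomy
  by_cases hpos : ∀ p ∈ S, 0 < D p
  · -- increasing case: c 1 ≤ c (n-1), i.e., e ≤ d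
    have hmono : ∀ i : ℕ, i < n → c i < c (i + 1) := by
      intro i hi
      obtain ⟨q, hq, hqe⟩ := hstep i hi
      have := hpos q hq
      linarith [hqe ▸ this]
    have hchain : ∀ k : ℕ, 1 + k ≤ n - 1 → c 1 ≤ c (1 + k) := by
      intro k
      induction k with
      | zero => intro _; exact le_of_eq (by norm_num)
      | succ k ih =>
        intro hk
        have h1 : 1 + k ≤ n - 1 := by omega
        have h2 : 1 + k < n := by omega
        have h3 : 1 + (k + 1) = (1 + k) + 1 := by omega
        rw [h3]
        exact le_trans (ih h1) (le_of_lt (hmono (1 + k) h2))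
    have := hchain (n - 2) (by omega)
    have heq : 1 + (n - 2) = n - 1 := by omega
    rw [heq, hc1, hcn1] at this
    linarith
  · -- decreasing case: c 0 > c 1, i.e., d > e
    push_neg at hpos
    obtain ⟨p, hp, hple⟩ := hpos
    have hplt : D p < 0 := lt_of_le_of_ne hple (hDne p hp)
    have hneg : ∀ q ∈ S, D q < 0 := by
      intro q hq
      by_contra hcon
      push_neg at hcon
      have hqgt : 0 < D q := lt_of_le_of_ne hcon (Ne.symm (hDne q hq))
      have : (0 : ℝ) ∈ Set.Icc (D p) (D q) := ⟨le_of_lt hplt, le_of_lt hqgt⟩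
      obtain ⟨r, hr, hr0⟩ := hconn.intermediate_value hp hq hDcont this
      exact hDne r hr hr0
    obtain ⟨q, hq, hqe⟩ := hstep 0 (by omega)
    have := hneg q hq
    have hc0 : c 0 = d := by
      rw [hcdef]; dsimp only
      have : (fun j : Fin n => if (j : ℕ) < 0 then e else d) = fun _ : Fin n => d := by
        funext j; simp
      rw [this, hdi]
    have hlt2 : c (0 + 1) - c 0 < 0 := by rw [hqe]; exact this
    rw [hc0, hc1] at hlt2
    linarith

/-- Claim 2: a continuous, symmetric, cancellative, associative `f : Iⁿ → I` on a
nontrivial real interval has at most one idempotent. -/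
theorem stmt_4 (n : ℕ) (hn : 2 ≤ n) (I : Set ℝ) (hI : I.OrdConnected)
    (hne : ∃ a ∈ I, ∃ b ∈ I, a ≠ b)
    (f : (Fin n → ℝ) → ℝ)
    (hmap : ∀ x : Fin n → ℝ, (∀ i, x i ∈ I) → f x ∈ I)
    (hcont : ContinuousOn f {x | ∀ i, x i ∈ I})
    (hsym : SymmOn n I f) (hcanc : CancOn n I f) (hassoc : NAssocOn n I f) :
    ∀ d ∈ I, ∀ e ∈ I, f (fun _ => d) = d → f (fun _ => e) = e → d = e := by
  intro d hd e he hdi hei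
  rcases lt_trichotomy d e with h | h | h
  · exact absurd h (fun h =>
      key_aux n hn I hI f hmap hcont hsym hcanc hassoc d hd e he hdi hei h)
  · exact h
  · exact absurd h (fun h =>
      key_aux n hn I hI f hmap hcont hsym hcanc hassoc e he d hd hei hdi h)
end

section
/- Let I be a nontrivial real interval and f : Iⁿ → I continuous, symmetric, cancellative, and associative, and suppose c ∈ I satisfies c < f(c,…,c). Then for every x ∈ I one has x < f(x, c, …, c) (with n-1 copies of c). -/
/-- Claim 3 (first part): if `c < f(c,…,c)` then `x < f(x, c, …, c)` for every `x ∈ I`. -/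
theorem stmt_5 (n : ℕ) (hn : 2 ≤ n) (I : Set ℝ) (hI : I.OrdConnected)
    (hne : ∃ a ∈ I, ∃ b ∈ I, a ≠ b)
    (f : (Fin n → ℝ) → ℝ)
    (hmap : ∀ x : Fin n → ℝ, (∀ i, x i ∈ I) → f x ∈ I)
    (hcont : ContinuousOn f {x | ∀ i, x i ∈ I})
    (hsym : SymmOn n I f) (hcanc : CancOn n I f) (hassoc : NAssocOn n I f)
    (c : ℝ) (hc : c ∈ I) (hcf : c < f (fun _ => c)) :
    ∀ x ∈ I, x < f (fun i => if (i : ℕ) = 0 then x else c) := by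

  intro x hx
  haveI : NeZero n := ⟨by omega⟩
  have hval0 : ∀ i : Fin n, ((i : ℕ) = 0 ↔ i = 0) := by
    intro i
    exact ⟨fun h => Fin.ext h, fun h => by rw [h]; rfl⟩
  by_contra hcon
  push_neg at hcon
  set g : ℝ → ℝ := fun t => f (fun i : Fin n => if (i : ℕ) = 0 then t else c) with hgdef
  have hmem : ∀ t, t ∈ I → ∀ i : Fin n, (if (i : ℕ) = 0 then t else c) ∈ I := by
    intro t ht i
    split <;> assumption
  have hgI : ∀ t ∈ I, g t ∈ I := fun t ht => hmap _ (hmem t ht)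
  have htuple : ContinuousOn (fun t : ℝ => fun i : Fin n => if (i : ℕ) = 0 then t else c) I := by
    apply continuousOn_pi.2
    intro i
    by_cases h : (i : ℕ) = 0 <;> simp only [h, if_true, if_false]
    · exact continuousOn_id
    · exact continuousOn_const
  have hgc : ContinuousOn g I :=
    ContinuousOn.comp hcont htuple (fun t ht => hmem t ht)
  have hgc_pos : c < g c := by
    have h1 : (fun i : Fin n => if (i : ℕ) = 0 then c else c) = fun _ : Fin n => c := by
      funext i
      split <;> rfl
    rw [hgdef]
    simp only [h1]
    exact hcf
  have hgx_le : g x ≤ x := hcon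
  have hsub : Set.uIcc c x ⊆ I := hI.uIcc_subset hc hx
  have hcontu : ContinuousOn (fun t => g t - t) (Set.uIcc c x) :=
    (hgc.mono hsub).sub continuousOn_id
  have h0 : (0:ℝ) ∈ Set.uIcc (g c - c) (g x - x) := by
    rw [Set.mem_uIcc]
    right
    constructor <;> linarith
  obtain ⟨p, hpmem, hp0⟩ := intermediate_value_uIcc hcontu h0
  have hpI : p ∈ I := hsub hpmem
  have hp : g p = p := by
    simp only at hp0
    linarith
  -- the associativity instance with tuple (c,…,c,p,c,…,c), p in position n
  set X : ℕ → ℝ := fun j => if j = n then p else c with hXdef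
  have hXmem : ∀ j, j < 2 * n - 1 → X j ∈ I := by
    intro j _
    by_cases h : j = n <;> simp [hXdef, h] <;> assumption
  have hE := hassoc X hXmem 0 (by omega)
  set d : ℝ := f (fun _ => c) with hddef
  have hdI : d ∈ I := hmap _ (fun _ => hc)
  set e : ℝ := f (fun l : Fin n => if (l : ℕ) = n - 1 then p else c) with hedef
  have heI : e ∈ I := by
    apply hmap
    intro i
    split <;> assumption
  -- e = p by symmetry (swap slots 0 and n-1) and the fixed point property
  have hep : e = p := by
    have hsw := hsym (fun i : Fin n => if (i : ℕ) = 0 then p else c) (hmem p hpI)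
      (Equiv.swap 0 ⟨n - 1, by omega⟩)
    have hcomp : ((fun i : Fin n => if (i : ℕ) = 0 then p else c) ∘
        (Equiv.swap (0 : Fin n) ⟨n - 1, by omega⟩)) =
        (fun l : Fin n => if (l : ℕ) = n - 1 then p else c) := by
      funext l
      simp only [Function.comp_apply]
      by_cases h2 : l = (⟨n - 1, by omega⟩ : Fin n)
      · rw [h2, Equiv.swap_apply_right,
          if_pos (show (((0 : Fin n)) : ℕ) = 0 from rfl),
          if_pos (show ((⟨n - 1, by omega⟩ : Fin n) : ℕ) = n - 1 from rfl)]
      · by_cases h1 : l = 0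
        · rw [h1, Equiv.swap_apply_left,
            if_neg (show ¬(((⟨n - 1, by omega⟩ : Fin n) : ℕ) = 0) by
              show ¬(n - 1 = 0); omega),
            if_neg (show ¬(((0 : Fin n) : ℕ) = n - 1) by
              show ¬((0 : ℕ) = n - 1); omega)]
        · rw [Equiv.swap_apply_of_ne_of_ne h1 h2,
            if_neg (fun h => h1 ((hval0 l).1 h)),
            if_neg (fun h => h2 (Fin.ext h))]
    rw [hcomp] at hsw
    rw [← hedef] at hsw
    rw [hsw]
    exact hp
  -- identify the two sides of the associativity identity
  have hL : (fun j : Fin n => if (j : ℕ) < 0 then X (j : ℕ)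
      else if (j : ℕ) = 0 then f (fun l : Fin n => X (0 + (l : ℕ)))
      else X ((j : ℕ) + n - 1)) =
      (fun j : Fin n => if (j : ℕ) = 0 then d else if (j : ℕ) = 1 then p else c) := by
    funext j
    have hjlt := j.isLt
    by_cases h0 : (j : ℕ) = 0
    · have hin : (fun l : Fin n => X (0 + (l : ℕ))) = (fun _ : Fin n => c) := by
        funext l
        have := l.isLt
        simp only [hXdef]
        rw [if_neg (by omega)]
      rw [if_neg (by omega), if_pos h0, if_pos h0, hin]
    · by_cases h1 : (j : ℕ) = 1
      · simp only [hXdef]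
        rw [if_neg (by omega), if_neg h0, if_neg h0, if_pos h1, if_pos (by omega)]
      · simp only [hXdef]
        rw [if_neg (by omega), if_neg h0, if_neg h0, if_neg h1, if_neg (by omega)]
  have hR : (fun j : Fin n => if (j : ℕ) < 0 + 1 then X (j : ℕ)
      else if (j : ℕ) = 0 + 1 then f (fun l : Fin n => X (0 + 1 + (l : ℕ)))
      else X ((j : ℕ) + n - 1)) =
      (fun j : Fin n => if (j : ℕ) = 0 then c else if (j : ℕ) = 1 then p else c) := by
    funext j
    have hjlt := j.isLt
    by_cases h0 : (j : ℕ) = 0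
    · simp only [hXdef]
      rw [if_pos (by omega), if_neg (by omega), if_pos h0]
    · by_cases h1 : (j : ℕ) = 1
      · have hin : (fun l : Fin n => X (0 + 1 + (l : ℕ))) =
            (fun l : Fin n => if (l : ℕ) = n - 1 then p else c) := by
          funext l
          have := l.isLt
          simp only [hXdef]
          by_cases h : (l : ℕ) = n - 1
          · rw [if_pos (by omega), if_pos h]
          · rw [if_neg (by omega), if_neg h]
        rw [if_neg (by omega), if_pos (by omega), hin, ← hedef, hep,
          if_neg h0, if_pos h1]
      · simp only [hXdef]
        rw [if_neg (by omega), if_neg (by omega), if_neg (by omega), if_neg h0, if_neg h1]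
  rw [hL, hR] at hE
  -- cancellativity in slot 0 gives d = c, contradicting c < d
  have hmemA : ∀ i : Fin n, (if (i : ℕ) = 0 then d else if (i : ℕ) = 1 then p else c) ∈ I := by
    intro i
    split
    · exact hdI
    · split <;> assumption
  have hmemB : ∀ i : Fin n, (if (i : ℕ) = 0 then c else if (i : ℕ) = 1 then p else c) ∈ I := by
    intro i
    split
    · exact hc
    · split <;> assumption
  have hdc := hcanc 0 _ _ hmemA hmemB (fun i hi => by
    have hne0 : ¬((i : ℕ) = 0) := fun h => hi ((hval0 i).1 h)
    rw [if_neg hne0, if_neg hne0]) hE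
  rw [if_pos (show (((0 : Fin n)) : ℕ) = 0 from rfl),
    if_pos (show (((0 : Fin n)) : ℕ) = 0 from rfl)] at hdc
  linarith
end

section
/- Let I be a nontrivial real interval and f : Iⁿ → I continuous, symmetric, cancellative, and associative, with c ∈ I satisfying c < f(c,…,c). For fixed x ∈ I define the sequence x₀ = x, x_m = f(x_{m-1}, c, …, c). Then (x_m) is strictly increasing and its limit is not in I; consequently sup I is not attained and I is open at its upper end. -/
/-- Claim 3: if `c < f(c,…,c)`, then for every `x ∈ I` the sequence
`x₀ = x`, `x_{m+1} = f(x_m, c, …, c)` is strictly increasing, its limit is not in `I`,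
and consequently `I` has no greatest element (it is open at its upper end). -/
theorem stmt_6 (n : ℕ) (hn : 2 ≤ n) (I : Set ℝ) (hI : I.OrdConnected)
    (hne : ∃ a ∈ I, ∃ b ∈ I, a ≠ b)
    (f : (Fin n → ℝ) → ℝ)
    (hmap : ∀ x : Fin n → ℝ, (∀ i, x i ∈ I) → f x ∈ I)
    (hcont : ContinuousOn f {x | ∀ i, x i ∈ I})
    (hsym : SymmOn n I f) (hcanc : CancOn n I f) (hassoc : NAssocOn n I f)
    (c : ℝ) (hc : c ∈ I) (hcf : c < f (fun _ => c)) :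
    ∀ x ∈ I, ∀ u : ℕ → ℝ, u 0 = x →
      (∀ m : ℕ, u (m + 1) = f (fun i => if (i : ℕ) = 0 then u m else c)) →
      StrictMono u ∧
      (∀ L ∈ I, ¬ Filter.Tendsto u Filter.atTop (nhds L)) ∧
      ¬ ∃ M ∈ I, ∀ y ∈ I, y ≤ M := by
  intro x hx u hu0 hurec
  have hn1 : 1 < n := hn
  set g : ℝ → ℝ := fun t => f (fun i : Fin n => if (i : ℕ) = 0 then t else c) with hg
  have hgmem : ∀ t ∈ I, g t ∈ I := by
    intro t ht
    exact hmap _ (fun i => by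
      show (if (i : ℕ) = 0 then t else c) ∈ I
      split <;> assumption)
  have hgc : c < g c := by
    have hcoll : (fun i : Fin n => if (i : ℕ) = 0 then c else c) = fun _ => c := by
      funext i; split <;> rfl
    show c < f (fun i : Fin n => if (i : ℕ) = 0 then c else c)
    rw [hcoll]; exact hcf
  -- symmetry: value with s in slot n-1 equals g s
  have hsw : ∀ s ∈ I, f (fun l : Fin n => if (l : ℕ) = n - 1 then s else c) = g s := by
    intro s hs
    have hmem : ∀ i : Fin n, (if (i : ℕ) = 0 then s else c) ∈ I := by
      intro i; split <;> assumption
    have H := hsym (fun l : Fin n => if (l : ℕ) = 0 then s else c) hmem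
      (Equiv.swap ⟨0, by omega⟩ ⟨n - 1, by omega⟩)
    show f _ = f (fun l : Fin n => if (l : ℕ) = 0 then s else c)
    rw [← H]
    refine congrArg f (funext fun l => ?_)
    simp only [Function.comp_apply]
    rcases eq_or_ne l (⟨0, by omega⟩ : Fin n) with h0 | h0
    · rw [h0, Equiv.swap_apply_left]
      have h1 : ¬ (((⟨0, by omega⟩ : Fin n) : ℕ) = n - 1) := by simp; omega
      have h2 : ¬ (((⟨n - 1, by omega⟩ : Fin n) : ℕ) = 0) := by simp; omega
      rw [if_neg h1, if_neg h2]
    · rcases eq_or_ne l (⟨n - 1, by omega⟩ : Fin n) with h1 | h1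
      · rw [h1, Equiv.swap_apply_right]
        have h2 : (((⟨n - 1, by omega⟩ : Fin n) : ℕ) = n - 1) := rfl
        have h3 : (((⟨0, by omega⟩ : Fin n) : ℕ) = 0) := rfl
        rw [if_pos h2, if_pos h3]
      · rw [Equiv.swap_apply_of_ne_of_ne h0 h1]
        have h2 : ¬ ((l : ℕ) = n - 1) := fun h => h1 (Fin.ext h)
        have h3 : ¬ ((l : ℕ) = 0) := fun h => h0 (Fin.ext h)
        rw [if_neg h2, if_neg h3]
  -- key: G (g t) s = G t (g s)
  have key : ∀ t ∈ I, ∀ s ∈ I,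
      f (fun j : Fin n => if (j : ℕ) = 0 then g t else if (j : ℕ) = 1 then s else c)
      = f (fun j : Fin n => if (j : ℕ) = 0 then t else if (j : ℕ) = 1 then g s else c) := by
    intro t ht s hs
    set X : ℕ → ℝ := fun j => if j = 0 then t else if j = n then s else c with hX
    have hXmem : ∀ j, j < 2 * n - 1 → X j ∈ I := by
      intro j _
      show (if j = 0 then t else if j = n then s else c) ∈ I
      split
      · exact ht
      · split <;> assumption
    have H := hassoc X hXmem 0 (by omega)
    have e1 : (fun j : Fin n => if (j : ℕ) < 0 then X j
        else if (j : ℕ) = 0 then f (fun l : Fin n => X (0 + (l : ℕ)))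
        else X ((j : ℕ) + n - 1))
        = fun j : Fin n => if (j : ℕ) = 0 then g t else if (j : ℕ) = 1 then s else c := by
      funext j
      have hj := j.isLt
      by_cases hj0 : (j : ℕ) = 0
      · rw [if_neg (by omega : ¬ ((j : ℕ) < 0)), if_pos hj0, if_pos hj0]
        show f _ = f (fun i : Fin n => if (i : ℕ) = 0 then t else c)
        refine congrArg f (funext fun l => ?_)
        have hl := l.isLt
        show X (0 + (l : ℕ)) = _
        simp only [hX, Nat.zero_add]
        by_cases hl0 : (l : ℕ) = 0
        · rw [if_pos hl0, if_pos hl0]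
        · rw [if_neg hl0, if_neg (by omega : ¬ ((l : ℕ) = n)), if_neg hl0]
      · rw [if_neg (by omega : ¬ ((j : ℕ) < 0)), if_neg hj0, if_neg hj0]
        by_cases hj1 : (j : ℕ) = 1
        · rw [if_pos hj1]
          have h4 : (j : ℕ) + n - 1 = n := by omega
          rw [h4]
          simp only [hX]
          rw [if_neg (by omega : ¬ (n = 0))]
          simp
        · rw [if_neg hj1]
          simp only [hX]
          rw [if_neg (by omega : ¬ ((j : ℕ) + n - 1 = 0)),
            if_neg (by omega : ¬ ((j : ℕ) + n - 1 = n))]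
    have e2 : (fun j : Fin n => if (j : ℕ) < 0 + 1 then X j
        else if (j : ℕ) = 0 + 1 then f (fun l : Fin n => X (0 + 1 + (l : ℕ)))
        else X ((j : ℕ) + n - 1))
        = fun j : Fin n => if (j : ℕ) = 0 then t else if (j : ℕ) = 1 then g s else c := by
      funext j
      have hj := j.isLt
      by_cases hj0 : (j : ℕ) = 0
      · rw [if_pos (by omega : (j : ℕ) < 0 + 1), if_pos hj0]
        simp only [hX]
        rw [if_pos hj0]
      · rw [if_neg (by omega : ¬ ((j : ℕ) < 0 + 1)), if_neg hj0]
        by_cases hj1 : (j : ℕ) = 1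
        · rw [if_pos (by omega : (j : ℕ) = 0 + 1), if_pos hj1, ← hsw s hs]
          refine congrArg f (funext fun l => ?_)
          have hl := l.isLt
          show X (0 + 1 + (l : ℕ)) = _
          simp only [hX]
          by_cases hl1 : (l : ℕ) = n - 1
          · rw [if_neg (by omega : ¬ (0 + 1 + (l : ℕ) = 0)),
              if_pos (by omega : 0 + 1 + (l : ℕ) = n), if_pos hl1]
          · rw [if_neg (by omega : ¬ (0 + 1 + (l : ℕ) = 0)),
              if_neg (by omega : ¬ (0 + 1 + (l : ℕ) = n)), if_neg hl1]
        · rw [if_neg (by omega : ¬ ((j : ℕ) = 0 + 1)), if_neg hj1]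
          simp only [hX]
          rw [if_neg (by omega : ¬ ((j : ℕ) + n - 1 = 0)),
            if_neg (by omega : ¬ ((j : ℕ) + n - 1 = n))]
    rw [e1, e2] at H
    exact H
  -- cancellation in slot 1
  have hcancel : ∀ t ∈ I, ∀ a ∈ I, ∀ b ∈ I,
      f (fun j : Fin n => if (j : ℕ) = 0 then t else if (j : ℕ) = 1 then a else c)
      = f (fun j : Fin n => if (j : ℕ) = 0 then t else if (j : ℕ) = 1 then b else c)
      → a = b := by
    intro t ht a ha b hb hfe
    have hmema : ∀ i : Fin n, (if (i : ℕ) = 0 then t else if (i : ℕ) = 1 then a else c) ∈ I := by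
      intro i; split
      · exact ht
      · split <;> assumption
    have hmemb : ∀ i : Fin n, (if (i : ℕ) = 0 then t else if (i : ℕ) = 1 then b else c) ∈ I := by
      intro i; split
      · exact ht
      · split <;> assumption
    have H := hcanc ⟨1, by omega⟩ _ _ hmema hmemb (fun i hi => by
      have h1 : (i : ℕ) ≠ 1 := fun h => hi (Fin.ext h)
      simp only [h1, if_false]) hfe
    simpa using H
  -- no fixed points
  have hnofix : ∀ t ∈ I, g t ≠ t := by
    intro t ht heq
    have H := key t ht c hc
    rw [heq] at H
    have := hcancel t ht c hc (g c) (hgmem c hc) H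
    exact absurd this.symm (ne_of_gt hgc)
  -- continuity of g on I
  have hgcont : ContinuousOn g I := by
    have he : Continuous (fun t : ℝ => fun i : Fin n => if (i : ℕ) = 0 then t else c) := by
      apply continuous_pi
      intro i
      split
      · exact continuous_id
      · exact continuous_const
    exact hcont.comp he.continuousOn (fun t ht i => by
      show (if (i : ℕ) = 0 then t else c) ∈ I
      split <;> assumption)
  -- g t > t on I
  have hgt : ∀ t ∈ I, t < g t := by
    intro t ht
    rcases lt_or_gt_of_ne (hnofix t ht) with h | h
    · exfalso
      have hcontₕ : ContinuousOn (fun y => g y - y) I := hgcont.sub continuousOn_id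
      have hpre : IsPreconnected ((fun y => g y - y) '' I) :=
        (hI.isPreconnected).image _ hcontₕ
      have hord := hpre.ordConnected
      have h0 : (0 : ℝ) ∈ (fun y => g y - y) '' I :=
        hord.out ⟨t, ht, rfl⟩ ⟨c, hc, rfl⟩ ⟨by simp only; linarith, by simp only; linarith⟩
      obtain ⟨y, hy, hy0⟩ := h0
      have : g y = y := by simp only at hy0; linarith
      exact hnofix y hy this
    · exact h
  -- sequence facts
  have humem : ∀ m, u m ∈ I := by
    intro m
    induction m with
    | zero => rw [hu0]; exact hx
    | succ m ih =>
      rw [hurec m]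
      exact hgmem (u m) ih
  have hstep : ∀ m, u m < u (m + 1) := by
    intro m
    rw [hurec m]
    exact hgt (u m) (humem m)
  have hmono : StrictMono u := strictMono_nat_of_lt_succ hstep
  have hpart2 : ∀ L ∈ I, ¬ Filter.Tendsto u Filter.atTop (nhds L) := by
    intro L hL hT
    have h1 : Filter.Tendsto (fun m => u (m + 1)) Filter.atTop (nhds L) :=
      hT.comp (Filter.tendsto_add_atTop_nat 1)
    have hptmem : (fun i : Fin n => if (i : ℕ) = 0 then L else c) ∈ {x | ∀ i, x i ∈ I} := by
      intro i
      show (if (i : ℕ) = 0 then L else c) ∈ I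
      split <;> assumption
    have htup : Filter.Tendsto (fun m => fun i : Fin n => if (i : ℕ) = 0 then u m else c)
        Filter.atTop (nhdsWithin (fun i : Fin n => if (i : ℕ) = 0 then L else c)
          {x | ∀ i, x i ∈ I}) := by
      apply tendsto_nhdsWithin_of_tendsto_nhds_of_eventually_within
      · apply tendsto_pi_nhds.mpr
        intro i
        split
        · exact hT
        · exact tendsto_const_nhds
      · filter_upwards with m i
        show (if (i : ℕ) = 0 then u m else c) ∈ I
        split
        · exact humem m
        · exact hc
    have h2 : Filter.Tendsto (fun m => g (u m)) Filter.atTop (nhds (g L)) :=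
      (hcont _ hptmem).tendsto.comp htup
    have h2' : Filter.Tendsto (fun m => u (m + 1)) Filter.atTop (nhds (g L)) := by
      refine h2.congr fun m => ?_
      rw [hurec m]
    have : g L = L := tendsto_nhds_unique h2' h1
    exact hnofix L hL this
  refine ⟨hmono, hpart2, ?_⟩
  rintro ⟨M, hM, hMub⟩
  have hb : BddAbove (Set.range u) := ⟨M, by rintro _ ⟨m, rfl⟩; exact hMub _ (humem m)⟩
  have hTend : Filter.Tendsto u Filter.atTop (nhds (⨆ m, u m)) :=
    tendsto_atTop_ciSup hmono.monotone hb
  have hLI : (⨆ m, u m) ∈ I := by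
    apply hI.out (humem 0) hM
    exact ⟨le_ciSup hb 0, ciSup_le fun m => hMub _ (humem m)⟩
  exact hpart2 _ hLI hTend
end

section
/- Let g : I^(n) → I be an n-associative function. Then g(x g(y) z) = g(x y z) for all strings x y z ∈ I^(n) with y ∈ I^(n), i.e., replacing a substring of length ≡ 1 (mod n-1) by its g-value does not change the g-value of the whole string. -/
private lemma aux_mod {k : ℕ} (t : ℕ) (h : k ∣ t) : (t + 1) % k = 1 % k := by
  obtain ⟨c, rfl⟩ := h
  exact Nat.mul_add_mod k c 1

private lemma aux_dvd {k t : ℕ} (h1 : 1 ≤ t) (h : t % k = 1 % k) : k ∣ t - 1 :=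
  (Nat.modEq_iff_dvd' h1).mp h.symm

private lemma aux_ge2 {k t : ℕ} (h : k ∣ t) (h0 : t ≠ 0) (h1 : t ≠ k) : 2 * k ≤ t := by
  obtain ⟨q, rfl⟩ := h
  rcases q with _ | _ | q
  · simp at h0
  · simp at h1
  · nlinarith [Nat.zero_le q, Nat.zero_le k]

/-- The case where the contracted block has length exactly `n`. -/
private theorem step1_aux {α : Type*} (n : ℕ) (hn : 2 ≤ n) (g : List α → α)
    (hassoc : ∀ x y z x' y' z' : List α, x ++ y ++ z = x' ++ y' ++ z' →
      y.length = n → y'.length = n → (x ++ y ++ z).length = 2 * n - 1 →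
      g (x ++ g y :: z) = g (x' ++ g y' :: z'))
    (hrec : ∀ l r : List α, l.length % (n - 1) = 1 % (n - 1) → 2 ≤ l.length →
      r.length = n - 1 → g (l ++ r) = g (g l :: r))
    (h5a : ∀ l : List α, l ≠ [] → l.length % (n - 1) = 1 % (n - 1) → g [g l] = g l) :
    ∀ N : ℕ, ∀ x y z : List α, x.length + z.length = N → y.length = n →
      (x ++ y ++ z).length % (n - 1) = 1 % (n - 1) →
      g (x ++ g y :: z) = g (x ++ y ++ z) := by
  obtain ⟨k, rfl⟩ : ∃ k, n = k + 1 := ⟨n - 1, by omega⟩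
  have hk : 1 ≤ k := by omega
  simp only [Nat.add_sub_cancel] at hassoc hrec h5a
  have hnmod : (k + 1) % k = 1 % k := Nat.add_mod_left k 1
  intro N
  induction N using Nat.strong_induction_on with
  | _ N IH =>
  intro x y z hN hy hm
  simp only [Nat.add_sub_cancel] at hm
  have hL : (x ++ y ++ z).length = x.length + z.length + (k + 1) := by
    simp only [List.length_append, hy]; omega
  have hdvd : k ∣ x.length + z.length := by
    have h1 := aux_dvd (t := (x ++ y ++ z).length) (by omega) hm
    have h2 : (x ++ y ++ z).length - 1 = x.length + z.length + k := by omega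
    rw [h2] at h1
    exact (Nat.dvd_add_self_right).mp h1
  rcases Nat.eq_zero_or_pos (x.length + z.length) with ha0 | hapos
  · -- base case: x = z = []
    have hx : x = [] := List.length_eq_zero_iff.mp (by omega)
    have hz : z = [] := List.length_eq_zero_iff.mp (by omega)
    subst hx; subst hz
    simp only [List.nil_append, List.append_nil]
    exact h5a y (by rintro rfl; simp only [List.length_nil] at hy; omega) (by rw [hy]; exact hnmod)
  · by_cases hak : x.length + z.length = k
    · -- total length is 2n-1: use hassoc directly
      have hwlen : (x ++ y ++ z).length = 2 * (k + 1) - 1 := by omega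
      have htake : ((x ++ y ++ z).take (k + 1)).length = k + 1 := by
        simp [List.length_take]; omega
      have hdrop : ((x ++ y ++ z).drop (k + 1)).length = k := by
        simp [List.length_drop]; omega
      have h1 := hassoc x y z [] ((x ++ y ++ z).take (k + 1)) ((x ++ y ++ z).drop (k + 1))
        (by simp) hy htake hwlen
      rw [h1]
      simp only [List.nil_append]
      rw [← hrec _ _ (by rw [htake]; exact hnmod) (by rw [htake]; omega) hdrop]
      rw [List.take_append_drop]
    · have ha2 : 2 * k ≤ x.length + z.length := aux_ge2 hdvd (by omega) hak
      by_cases hzk : k ≤ z.length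
      · -- peel off the last k letters of z
        obtain ⟨z', r, hzz, hrlen, hz'len⟩ :
            ∃ z' r : List α, z' ++ r = z ∧ r.length = k ∧ z'.length = z.length - k :=
          ⟨z.take (z.length - k), z.drop (z.length - k), List.take_append_drop _ _,
            by rw [List.length_drop]; omega, by rw [List.length_take]; omega⟩
        have hdvd' : k ∣ x.length + z.length - k := Nat.dvd_sub hdvd (dvd_refl k)
        have e1 : g ((x ++ y ++ z') ++ r) = g (g (x ++ y ++ z') :: r) := by
          refine hrec _ _ ?_ ?_ hrlen
          · have h3 : (x ++ y ++ z').length = (x.length + z.length - k) + (k + 1) := by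
              simp only [List.length_append, hy, hz'len]; omega
            have h4 : (x.length + z.length - k) + (k + 1) =
                (x.length + z.length - k + k) + 1 := by omega
            rw [h3, h4]
            exact aux_mod _ (by exact Dvd.dvd.add hdvd' (dvd_refl k))
          · simp only [List.length_append, hy, hz'len]; omega
        have e2 : g ((x ++ g y :: z') ++ r) = g (g (x ++ g y :: z') :: r) := by
          refine hrec _ _ ?_ ?_ hrlen
          · have h3 : (x ++ g y :: z').length = (x.length + z.length - k) + 1 := by
              simp only [List.length_append, List.length_cons, hz'len]; omega
            rw [h3]
            exact aux_mod _ hdvd'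
          · simp only [List.length_append, List.length_cons, hz'len]; omega
        have e3 : g (x ++ g y :: z') = g (x ++ y ++ z') := by
          refine IH (x.length + z'.length) (by omega) x y z' rfl hy ?_
          have h3 : (x ++ y ++ z').length = (x.length + z.length - k + k) + 1 := by
            simp only [List.length_append, hy, hz'len]; omega
          simp only [Nat.add_sub_cancel]
          rw [h3]
          exact aux_mod _ (Dvd.dvd.add hdvd' (dvd_refl k))
        calc g (x ++ g y :: z)
            = g ((x ++ g y :: z') ++ r) := by
              rw [show (x ++ g y :: z') ++ r = x ++ g y :: z by
                simp [List.append_assoc, ← hzz]]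
          _ = g (g (x ++ g y :: z') :: r) := e2
          _ = g (g (x ++ y ++ z') :: r) := by rw [e3]
          _ = g ((x ++ y ++ z') ++ r) := e1.symm
          _ = g (x ++ y ++ z) := by
              rw [show (x ++ y ++ z') ++ r = x ++ y ++ z by
                simp [List.append_assoc, ← hzz]]
      · -- z is short: mixed decomposition + hassoc
        push_neg at hzk
        have hxlen : k + 1 ≤ x.length := by omega
        obtain ⟨x₁, x₂, hx12, hx2len⟩ :
            ∃ x₁ x₂ : List α, x = x₁ ++ x₂ ∧ x₂.length = k - 1 - z.length :=
          ⟨x.take (x.length - (k - 1 - z.length)), x.drop (x.length - (k - 1 - z.length)),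
            (List.take_append_drop _ _).symm, by rw [List.length_drop]; omega⟩
        obtain ⟨y₁, y₂, hy12, hy1len⟩ :
            ∃ y₁ y₂ : List α, y = y₁ ++ y₂ ∧ y₁.length = 1 + z.length :=
          ⟨y.take (1 + z.length), y.drop (1 + z.length),
            (List.take_append_drop _ _).symm, by rw [List.length_take, hy]; omega⟩
        have hx1len : x₁.length = x.length + z.length + 1 - k := by
          have h := congrArg List.length hx12
          simp only [List.length_append] at h; omega
        have hy2len : y₂.length = k - z.length := by
          have h := congrArg List.length hy12
          simp only [List.length_append] at h
          rw [hy] at h; omega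
        have hdvd' : k ∣ x.length + z.length - k := Nat.dvd_sub hdvd (dvd_refl k)
        have hx1mod : x₁.length % k = 1 % k := by
          have h3 : x₁.length = (x.length + z.length - k) + 1 := by omega
          rw [h3]; exact aux_mod _ hdvd'
        have E3 : g (x ++ g y :: z) = g (g x₁ :: (x₂ ++ g y :: z)) := by
          rw [show x ++ g y :: z = x₁ ++ (x₂ ++ g y :: z) by rw [hx12]; simp]
          refine hrec x₁ _ hx1mod (by omega) ?_
          simp only [List.length_append, List.length_cons, hx2len]; omega
        have E4 : g ((g x₁ :: x₂) ++ g y :: z) =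
            g ([] ++ g ((g x₁ :: x₂) ++ y₁) :: (y₂ ++ z)) := by
          refine hassoc (g x₁ :: x₂) y z [] ((g x₁ :: x₂) ++ y₁) (y₂ ++ z) ?_ hy ?_ ?_
          · rw [hy12]; simp
          · simp only [List.length_append, List.length_cons, hx2len, hy1len]; omega
          · simp only [List.length_append, List.length_cons, hx2len, hy]; omega
        have E2 : g (x₁ ++ (x₂ ++ y₁)) = g (g x₁ :: (x₂ ++ y₁)) := by
          refine hrec x₁ _ hx1mod (by omega) ?_
          simp only [List.length_append, hx2len, hy1len]; omega
        have E1 : g ((x ++ y₁) ++ (y₂ ++ z)) = g (g (x ++ y₁) :: (y₂ ++ z)) := by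
          refine hrec _ _ ?_ ?_ ?_
          · have h3 : (x ++ y₁).length = (x.length + z.length) + 1 := by
              simp only [List.length_append, hy1len]; omega
            rw [h3]; exact aux_mod _ hdvd
          · simp only [List.length_append, hy1len]; omega
          · simp only [List.length_append, hy2len]; omega
        calc g (x ++ g y :: z)
            = g (g x₁ :: (x₂ ++ g y :: z)) := E3
          _ = g ((g x₁ :: x₂) ++ g y :: z) := by simp
          _ = g ([] ++ g ((g x₁ :: x₂) ++ y₁) :: (y₂ ++ z)) := E4
          _ = g (g (g x₁ :: (x₂ ++ y₁)) :: (y₂ ++ z)) := by simp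
          _ = g (g (x₁ ++ (x₂ ++ y₁)) :: (y₂ ++ z)) := by rw [E2]
          _ = g (g (x ++ y₁) :: (y₂ ++ z)) := by rw [hx12, List.append_assoc]
          _ = g ((x ++ y₁) ++ (y₂ ++ z)) := E1.symm
          _ = g (x ++ y ++ z) := by rw [hy12]; simp [List.append_assoc]

/-- Proposition 2.5, (i) ⟹ (iii): if `g : I⁽ⁿ⁾ → I` is `n`-associative (its
restriction to length-`n` strings is associative, it is built by the left-nested
recursion (4), and condition (5) holds), then replacing a substring of length
`≡ 1 (mod n-1)` by its `g`-value does not change the `g`-value of the whole string.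
Strings over `I` are encoded as lists; `I⁽ⁿ⁾` consists of the nonempty lists whose
length is `≡ 1 (mod n-1)`. -/
theorem stmt_7 {α : Type*} [Nonempty α] (n : ℕ) (hn : 2 ≤ n) (g : List α → α)
    -- (i): the restriction gₙ of g to length-n strings is associative
    (hassoc : ∀ x y z x' y' z' : List α, x ++ y ++ z = x' ++ y' ++ z' →
      y.length = n → y'.length = n → (x ++ y ++ z).length = 2 * n - 1 →
      g (x ++ g y :: z) = g (x' ++ g y' :: z'))
    -- (ii): condition (4), left-nested recursion for m > n
    (hrec : ∀ l r : List α, l.length % (n - 1) = 1 % (n - 1) → 2 ≤ l.length →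
      r.length = n - 1 → g (l ++ r) = g (g l :: r))
    -- (iii): condition (5): g₁ ∘ g = g and g(x g₁(y) z) = g(x y z) for single letters y
    (h5a : ∀ l : List α, l ≠ [] → l.length % (n - 1) = 1 % (n - 1) → g [g l] = g l)
    (h5b : ∀ (x : List α) (a : α) (z : List α),
      (x ++ a :: z).length % (n - 1) = 1 % (n - 1) →
      g (x ++ g [a] :: z) = g (x ++ a :: z)) :
    ∀ x y z : List α, (x ++ y ++ z).length % (n - 1) = 1 % (n - 1) →
      y ≠ [] → y.length % (n - 1) = 1 % (n - 1) →
      g (x ++ g y :: z) = g (x ++ y ++ z) := by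
  have hk : 1 ≤ n - 1 := by omega
  have step1 : ∀ x y z : List α, y.length = n →
      (x ++ y ++ z).length % (n - 1) = 1 % (n - 1) →
      g (x ++ g y :: z) = g (x ++ y ++ z) :=
    fun x y z => step1_aux n hn g hassoc hrec h5a (x.length + z.length) x y z rfl
  suffices H : ∀ M : ℕ, ∀ y : List α, y.length = M → ∀ x z : List α,
      (x ++ y ++ z).length % (n - 1) = 1 % (n - 1) → y ≠ [] →
      y.length % (n - 1) = 1 % (n - 1) → g (x ++ g y :: z) = g (x ++ y ++ z) by
    intro x y z h1 h2 h3
    exact H y.length y rfl x z h1 h2 h3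
  intro M
  induction M using Nat.strong_induction_on with
  | _ M IH =>
  intro y hM x z hm hy0 hy1
  have hylen1 : 1 ≤ y.length := List.length_pos_iff.mpr hy0
  rcases eq_or_ne y.length 1 with h1 | h1
  · obtain ⟨a, rfl⟩ := List.length_eq_one_iff.mp h1
    have h := h5b x a z (by simpa using hm)
    simpa using h
  · rcases eq_or_ne y.length n with hn' | hn'
    · exact step1 x y z hn' hm
    · have hy1' : (n - 1) ∣ y.length - 1 := aux_dvd hylen1 hy1
      have hge : 2 * (n - 1) ≤ y.length - 1 :=
        aux_ge2 hy1' (by omega) (by omega)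
      obtain ⟨y', r, hy12, hrlen⟩ : ∃ y' r : List α, y = y' ++ r ∧ r.length = n - 1 :=
        ⟨y.take (y.length - (n - 1)), y.drop (y.length - (n - 1)),
          (List.take_append_drop _ _).symm, by rw [List.length_drop]; omega⟩
      have hy'len : y'.length = y.length - (n - 1) := by
        have h := congrArg List.length hy12
        simp only [List.length_append] at h; omega
      have hy'mod : y'.length % (n - 1) = 1 % (n - 1) := by
        have h3 : y'.length = (y.length - 1 - (n - 1)) + 1 := by omega
        rw [h3]; exact aux_mod _ (Nat.dvd_sub hy1' (dvd_refl _))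
      have er : g (y' ++ r) = g (g y' :: r) := hrec y' r hy'mod (by omega) hrlen
      have hdm : (n - 1) ∣ (x ++ y ++ z).length - 1 :=
        aux_dvd (by simp only [List.length_append]; omega) hm
      have hxz : (n - 1) ∣ x.length + z.length := by
        have h4 : (x ++ y ++ z).length - 1 - (y.length - 1) = x.length + z.length := by
          simp only [List.length_append]; omega
        rw [← h4]; exact Nat.dvd_sub hdm hy1'
      have hm' : (x ++ y' ++ (r ++ z)).length % (n - 1) = 1 % (n - 1) := by
        have h3 : (x ++ y' ++ (r ++ z)).length = (x ++ y ++ z).length := by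
          simp only [List.length_append, hy'len, hrlen]; omega
        rw [h3]; exact hm
      have hstep := step1 x (g y' :: r) z
        (by simp only [List.length_cons, hrlen]; omega)
        (by
          have h3 : (x ++ (g y' :: r) ++ z).length =
              (x.length + z.length + (n - 1)) + 1 := by
            simp only [List.length_append, List.length_cons, hrlen]; omega
          rw [h3]
          exact aux_mod _ (Dvd.dvd.add hxz (dvd_refl _)))
      have hIH := IH y'.length (by omega) y' rfl x (r ++ z) hm'
        (by rw [← List.length_pos_iff, hy'len]; omega) hy'mod
      calc g (x ++ g y :: z)
          = g (x ++ g (g y' :: r) :: z) := by rw [hy12, er]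
        _ = g (x ++ (g y' :: r) ++ z) := hstep
        _ = g (x ++ g y' :: (r ++ z)) := by simp
        _ = g (x ++ y' ++ (r ++ z)) := hIH
        _ = g (x ++ y ++ z) := by rw [hy12]; simp [List.append_assoc]
end

section
/- Let g : I^(n) → I be a function with g₁ ∘ g = g satisfying g(g(x₁)⋯g(xₙ)) = g(x₁⋯xₙ) for all strings x₁,…,xₙ ∈ I^(n) (concatenation on the right). Then g satisfies g(x g(y) z) = g(x y z) for every string x y z ∈ I^(n) with y ∈ I^(n). -/
private lemma flat_single {α : Type*} (l : List α) :
    (l.map fun c => [c]).flatten = l := by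
  induction l <;> simp [*]

private lemma listver {α : Type*} (n : ℕ) (g : List α → α)
    (h2 : ∀ l : Fin n → List α, (∀ i, l i ≠ []) →
      (∀ i, (l i).length % (n - 1) = 1 % (n - 1)) →
      g (List.ofFn fun i => g (l i)) = g (List.flatten (List.ofFn l)))
    (L : List (List α)) (hL : L.length = n)
    (hc : ∀ u ∈ L, u ≠ [] ∧ u.length % (n - 1) = 1 % (n - 1)) :
    g (L.map g) = g L.flatten := by
  have hlt : ∀ i : Fin n, (i : ℕ) < L.length := fun i => hL ▸ i.isLt
  set l : Fin n → List α := fun i => L[(i : ℕ)]'(hlt i) with hl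
  have hofn : List.ofFn l = L := by
    apply List.ext_getElem
    · simp [hL]
    · intro i hi1 hi2
      simp [l]
  have hofn2 : (List.ofFn fun i => g (l i)) = L.map g := by
    apply List.ext_getElem
    · simp [hL]
    · intro i hi1 hi2
      simp [l]
  have := h2 l (fun i => (hc _ (List.getElem_mem (hlt i))).1)
    (fun i => (hc _ (List.getElem_mem (hlt i))).2)
  rw [hofn, hofn2] at this
  exact this

private lemma good {α : Type*} (n : ℕ) (hn : 2 ≤ n) (g : List α → α)
    (h1 : ∀ l : List α, l ≠ [] → l.length % (n - 1) = 1 % (n - 1) → g [g l] = g l)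
    (h2 : ∀ l : Fin n → List α, (∀ i, l i ≠ []) →
      (∀ i, (l i).length % (n - 1) = 1 % (n - 1)) →
      g (List.ofFn fun i => g (l i)) = g (List.flatten (List.ofFn l)))
    (y : List α) (X Z : List (List α))
    (hlen : X.length + Z.length = n - 1)
    (hXc : ∀ u ∈ X, u ≠ [] ∧ u.length % (n - 1) = 1 % (n - 1))
    (hZc : ∀ u ∈ Z, u ≠ [] ∧ u.length % (n - 1) = 1 % (n - 1))
    (hy : y ≠ []) (hym : y.length % (n - 1) = 1 % (n - 1)) :
    g (X.flatten ++ g y :: Z.flatten) = g (X.flatten ++ y ++ Z.flatten) := by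
  have hcond : ∀ u ∈ X ++ [y] ++ Z, u ≠ [] ∧ u.length % (n - 1) = 1 % (n - 1) := by
    intro u hu
    simp only [List.mem_append, List.mem_singleton] at hu
    rcases hu with (h | h) | h
    · exact hXc u h
    · exact h ▸ ⟨hy, hym⟩
    · exact hZc u h
  have hcond2 : ∀ u ∈ X ++ [[g y]] ++ Z, u ≠ [] ∧ u.length % (n - 1) = 1 % (n - 1) := by
    intro u hu
    simp only [List.mem_append, List.mem_singleton] at hu
    rcases hu with (h | h) | h
    · exact hXc u h
    · subst h; exact ⟨by simp, by simp⟩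
    · exact hZc u h
  have e1 := listver n g h2 (X ++ [y] ++ Z) (by simp; omega) hcond
  have e2 := listver n g h2 (X ++ [[g y]] ++ Z) (by simp; omega) hcond2
  have hmapeq : (X ++ [[g y]] ++ Z).map g = (X ++ [y] ++ Z).map g := by
    simp [h1 y hy hym]
  rw [hmapeq, e1] at e2
  have hf1 : (X ++ [y] ++ Z).flatten = X.flatten ++ y ++ Z.flatten := by simp
  have hf2 : (X ++ [[g y]] ++ Z).flatten = X.flatten ++ g y :: Z.flatten := by simp
  rw [hf1, hf2] at e2
  exact e2.symm

private lemma decomp {α : Type*} (m : ℕ) (w : List α) (a : ℕ)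
    (ha : a ≤ w.length) (hmod : w.length % m = a % m) (h0 : a = 0 → w = []) :
    ∃ W : List (List α), W.flatten = w ∧ W.length = a ∧
      ∀ u ∈ W, u ≠ [] ∧ u.length % m = 1 % m := by
  rcases Nat.eq_zero_or_pos a with h | h
  · exact ⟨[], by simp [h0 h], by simp [h], by simp⟩
  · set k := w.length - (a - 1) with hk
    have hk1 : 1 ≤ k := by omega
    have hkle : k ≤ w.length := by omega
    have hkm : k % m = 1 % m := by
      have hw : w.length = (a - 1) + k := by omega
      have ha' : a = (a - 1) + 1 := by omega
      rw [hw, ha'] at hmod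
      exact Nat.ModEq.add_left_cancel' (a - 1) hmod
    refine ⟨w.take k :: (w.drop k).map (fun c => [c]), ?_, ?_, ?_⟩
    · show (w.take k :: (w.drop k).map fun c => [c]).flatten = w
      rw [List.flatten_cons, flat_single, List.take_append_drop]
    · simp; omega
    · intro u hu
      simp only [List.mem_cons, List.mem_map] at hu
      rcases hu with h | ⟨c, _, rfl⟩
      · subst h
        constructor
        · apply List.ne_nil_of_length_pos
          simp; omega
        · rw [List.length_take, min_eq_left hkle]; exact hkm
      · exact ⟨by simp, by simp⟩

private lemma goodcase {α : Type*} (n : ℕ) (hn : 2 ≤ n) (g : List α → α)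
    (h1 : ∀ l : List α, l ≠ [] → l.length % (n - 1) = 1 % (n - 1) → g [g l] = g l)
    (h2 : ∀ l : Fin n → List α, (∀ i, l i ≠ []) →
      (∀ i, (l i).length % (n - 1) = 1 % (n - 1)) →
      g (List.ofFn fun i => g (l i)) = g (List.flatten (List.ofFn l)))
    (x y z : List α) (a b : ℕ) (hab : a + b = n - 1)
    (hax : a ≤ x.length) (hbz : b ≤ z.length)
    (hmx : x.length % (n - 1) = a % (n - 1)) (hmz : z.length % (n - 1) = b % (n - 1))
    (h0x : a = 0 → x = []) (h0z : b = 0 → z = [])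
    (hy : y ≠ []) (hym : y.length % (n - 1) = 1 % (n - 1)) :
    g (x ++ g y :: z) = g (x ++ y ++ z) := by
  obtain ⟨X, hXf, hXl, hXc⟩ := decomp (n - 1) x a hax hmx h0x
  obtain ⟨Z, hZf, hZl, hZc⟩ := decomp (n - 1) z b hbz hmz h0z
  have := good n hn g h1 h2 y X Z (by omega) hXc hZc hy hym
  rw [hXf, hZf] at this
  exact this

/-- Proposition 2.5, (iv) ⟹ (iii): if `g : I⁽ⁿ⁾ → I` satisfies `g₁ ∘ g = g` and
`g(g(x₁)⋯g(xₙ)) = g(x₁⋯xₙ)` for all strings `x₁, …, xₙ ∈ I⁽ⁿ⁾`, then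
`g(x g(y) z) = g(x y z)` for every string `x y z ∈ I⁽ⁿ⁾` with `y ∈ I⁽ⁿ⁾`.
`I⁽ⁿ⁾` is the set of nonempty lists over `I` of length `≡ 1 (mod n-1)`. -/
theorem stmt_8 {α : Type*} [Nonempty α] (n : ℕ) (hn : 2 ≤ n) (g : List α → α)
    (h1 : ∀ l : List α, l ≠ [] → l.length % (n - 1) = 1 % (n - 1) → g [g l] = g l)
    (h2 : ∀ l : Fin n → List α, (∀ i, l i ≠ []) →
      (∀ i, (l i).length % (n - 1) = 1 % (n - 1)) →
      g (List.ofFn fun i => g (l i)) = g (List.flatten (List.ofFn l))) :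
    ∀ x y z : List α, (x ++ y ++ z).length % (n - 1) = 1 % (n - 1) →
      y ≠ [] → y.length % (n - 1) = 1 % (n - 1) →
      g (x ++ g y :: z) = g (x ++ y ++ z) := by
  intro x y z htot hy hym
  set m := n - 1 with hm
  have hm1 : 1 ≤ m := by omega
  -- x.length + z.length ≡ 0 mod m
  have hxz : (x.length + z.length) % m = 0 := by
    have h' : (x.length + z.length) + y.length ≡ 0 + 1 [MOD m] := by
      have : (x ++ y ++ z).length = (x.length + z.length) + y.length := by
        simp; omega
      rw [this] at htot
      simpa [Nat.ModEq] using htot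
    have := Nat.ModEq.add_right_cancel (hym : y.length ≡ 1 [MOD m]) h'
    simpa [Nat.ModEq] using this
  rcases eq_or_ne x [] with rfl | hxne
  · rcases eq_or_ne z [] with rfl | hzne
    · simpa using h1 y hy hym
    · -- a = 0, b = m
      have hz0 : z.length % m = 0 := by simpa using hxz
      have hzge : m ≤ z.length := by
        have : m ∣ z.length := Nat.dvd_of_mod_eq_zero hz0
        exact Nat.le_of_dvd (List.length_pos_iff.mpr hzne) this
      exact goodcase n hn g h1 h2 [] y z 0 m (by omega) (by simp) hzge
        (by simp) (hz0.trans (Nat.mod_self m).symm) (fun _ => rfl) (fun h => absurd h (by omega))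
        hy hym
  · rcases eq_or_ne z [] with rfl | hzne
    · have hx0 : x.length % m = 0 := by simpa using hxz
      have hxge : m ≤ x.length := by
        have : m ∣ x.length := Nat.dvd_of_mod_eq_zero hx0
        exact Nat.le_of_dvd (List.length_pos_iff.mpr hxne) this
      exact goodcase n hn g h1 h2 x y [] m 0 (by omega) hxge (by simp)
        (hx0.trans (Nat.mod_self m).symm) (by simp) (fun h => absurd h (by omega)) (fun _ => rfl)
        hy hym
    · set r := x.length % m with hr
      set s := z.length % m with hs
      have hrs : (r + s) % m = 0 := by
        rw [hr, hs, ← Nat.add_mod]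
        exact hxz
      have hrlt : r < m := Nat.mod_lt _ (by omega)
      have hslt : s < m := Nat.mod_lt _ (by omega)
      have hcases : r + s = 0 ∨ r + s = m := by
        have hdvd : m ∣ r + s := Nat.dvd_of_mod_eq_zero hrs
        obtain ⟨q, hq⟩ := hdvd
        have hq2 : q ≤ 1 := by nlinarith
        interval_cases q <;> omega
      rcases hcases with h0 | hsum
      · -- bad case: r = 0 and s = 0
        have hr0 : x.length % m = 0 := by omega
        have hs0 : z.length % m = 0 := by omega
        have hxge : m ≤ x.length := Nat.le_of_dvd (List.length_pos_iff.mpr hxne)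
          (Nat.dvd_of_mod_eq_zero hr0)
        have hzge : m ≤ z.length := Nat.le_of_dvd (List.length_pos_iff.mpr hzne)
          (Nat.dvd_of_mod_eq_zero hs0)
        -- step 1 : g (g y :: z) = g (y ++ z)
        have step1 : g (g y :: z) = g (y ++ z) := by
          have := goodcase n hn g h1 h2 [] y z 0 m (by omega) (by simp) hzge
            (by simp) (hs0.trans (Nat.mod_self m).symm) (fun _ => rfl) (fun h => absurd h (by omega))
            hy hym
          simpa using this
        have hyzne : y ++ z ≠ [] := by simp [hy]
        have hyzm : (y ++ z).length % m = 1 % m := by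
          rw [List.length_append, Nat.add_mod, hs0, hym]
          simp [Nat.mod_mod_of_dvd]
        have hgyzne : (g y :: z) ≠ [] := by simp
        have hgyzm : (g y :: z).length % m = 1 % m := by
          simp only [List.length_cons]
          rw [Nat.add_mod, hs0]
          simp
        -- step 2 : g (x ++ [g (g y :: z)]) = g (x ++ (g y :: z))
        have step2 : g (x ++ g (g y :: z) :: ([] : List α)) = g (x ++ (g y :: z) ++ []) := by
          exact goodcase n hn g h1 h2 x (g y :: z) [] m 0 (by omega) hxge (by simp)
            (hr0.trans (Nat.mod_self m).symm) (by simp) (fun h => absurd h (by omega)) (fun _ => rfl)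
            hgyzne hgyzm
        -- step 3
        have step3 : g (x ++ g (y ++ z) :: ([] : List α)) = g (x ++ (y ++ z) ++ []) := by
          exact goodcase n hn g h1 h2 x (y ++ z) [] m 0 (by omega) hxge (by simp)
            (hr0.trans (Nat.mod_self m).symm) (by simp) (fun h => absurd h (by omega)) (fun _ => rfl)
            hyzne hyzm
        simp only [List.append_nil] at step2 step3
        rw [step1] at step2
        have hfin : g (x ++ g y :: z) = g (x ++ (y ++ z)) := by
          rw [← step2, step3]
        rw [hfin, List.append_assoc]
      · -- good case: a = r ≥ 1, b = s ≥ 1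
        have hr1 : 1 ≤ r := by omega
        have hs1 : 1 ≤ s := by omega
        exact goodcase n hn g h1 h2 x y z r s (by omega)
          (Nat.mod_le _ _) (Nat.mod_le _ _)
          ((Nat.mod_mod_of_dvd x.length dvd_rfl).symm)
          ((Nat.mod_mod_of_dvd z.length dvd_rfl).symm)
          (fun h => absurd h (by omega)) (fun h => absurd h (by omega))
          hy hym
end

section
/- A function g : I* → I (with g₀(ε) = ε convention, i.e., g is defined on nonempty strings) satisfies g(x g(y) z) = g(x y z) for all strings x, y, z if and only if it satisfies g(g(x) g(y)) = g(x y) for all nonempty strings x, y together with g₁ ∘ g = g. -/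
/-- Proposition 2.2, (iii) ⟺ (iv): a function `g : I* → I` on nonempty strings
satisfies `g(x g(y) z) = g(x y z)` for all strings `x, z` (possibly empty) and
nonempty `y`, if and only if it satisfies `g(g(x) g(y)) = g(x y)` for all nonempty
strings `x, y` together with `g₁ ∘ g = g`. -/
theorem stmt_9 {α : Type*} [Nonempty α] (g : List α → α) :
    (∀ x y z : List α, y ≠ [] → g (x ++ g y :: z) = g (x ++ y ++ z)) ↔
    ((∀ x : List α, x ≠ [] → g [g x] = g x) ∧
      ∀ x y : List α, x ≠ [] → y ≠ [] → g [g x, g y] = g (x ++ y)) := by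
  constructor
  · intro H
    refine ⟨fun x hx => by simpa using H [] x [] hx, fun x y hx hy => ?_⟩
    have h1 : g ([] ++ g x :: [g y]) = g ([] ++ x ++ [g y]) := H [] x [g y] hx
    have h2 : g (x ++ g y :: []) = g (x ++ y ++ []) := H x y [] hy
    simpa using h1.trans (by simpa using h2)
  · rintro ⟨h1, h2⟩ x y z hy
    -- key: g ([g y] ++ z) = g (y ++ z) for z ≠ []
    have key : ∀ z : List α, z ≠ [] → g (g y :: z) = g (y ++ z) := by
      intro z hz
      have : g [g [g y], g z] = g ([g y] ++ z) := h2 [g y] z (by simp) hz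
      rw [h1 y hy] at this
      rw [show g y :: z = [g y] ++ z from rfl, ← this, h2 y z hy hz]
    rcases eq_or_ne x [] with rfl | hx
    · rcases eq_or_ne z [] with rfl | hz
      · simpa using h1 y hy
      · simpa using key z hz
    · rcases eq_or_ne z [] with rfl | hz
      · have : g [g x, g [g y]] = g (x ++ [g y]) := h2 x [g y] hx (by simp)
        rw [h1 y hy, h2 x y hx hy] at this
        simpa using this.symm
      · have e1 : g [g x, g (g y :: z)] = g (x ++ (g y :: z)) :=
          h2 x (g y :: z) hx (by simp)
        rw [key z hz, h2 x (y ++ z) hx (by simp [hy])] at e1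
        rw [List.append_assoc]
        exact e1.symm
end

section
/- Let f : Iⁿ → I be an associative n-ary operation, and define g on strings of length m ≡ 1 (mod n-1) by left-nested iteration: gₙ = f and g_m(x₁⋯x_m) = f(g_{m-n+1}(x₁⋯x_{m-n+1}), x_{m-n+2}, …, x_m). Then g(g(x₁)⋯g(xₙ)) = g(x₁⋯xₙ) for all strings x₁, …, xₙ of lengths in Aₙ, where g₁ = id. -/
private lemma auxC {α : Type*} (n : ℕ) (g : List α → α) (hn : 2 ≤ n)
    (hassoc : ∀ x y z x' y' z' : List α, x ++ y ++ z = x' ++ y' ++ z' →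
      y.length = n → y'.length = n → (x ++ y ++ z).length = 2 * n - 1 →
      g (x ++ g y :: z) = g (x' ++ g y' :: z'))
    (hg1 : ∀ a : α, g [a] = a)
    (hrec : ∀ l r : List α, l ≠ [] → l.length % (n - 1) = 1 % (n - 1) →
      r.length = n - 1 → g (l ++ r) = g (g l :: r)) :
    ∀ N A (a b c : List α), a.length = A → b.length = n →
      (a ++ b ++ c).length = N → N % (n - 1) = 1 % (n - 1) →
      g (a ++ b ++ c) = g (a ++ g b :: c) := by
  have hnmod : n % (n - 1) = 1 % (n - 1) := by
    conv_lhs => rw [show n = (n-1)+1 by omega]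
    exact Nat.add_mod_left _ _
  intro N
  induction N using Nat.strong_induction_on with
  | _ N ihN =>
  intro A
  induction A using Nat.strong_induction_on with
  | _ A ihA =>
  intro a b c ha hb hN hmod
  simp only [List.length_append] at hN
  have hsub : ∀ M : ℕ, M ≤ N → (n - 1) ∣ (N - M) → M % (n-1) = 1 % (n-1) := by
    intro M hle hdv
    exact ((Nat.modEq_iff_dvd' hle).mpr hdv).trans hmod
  rcases eq_or_lt_of_le (show n ≤ N by omega) with hNn | hNn
  · -- N = n : a and c are empty
    have ha0 : a = [] := List.eq_nil_of_length_eq_zero (by omega)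
    have hc0 : c = [] := List.eq_nil_of_length_eq_zero (by omega)
    subst ha0 hc0
    simp [hg1 (g b)]
  · -- N > n, so N ≥ 2n-1
    have hdvd : (n - 1) ∣ (N - n) :=
      (Nat.modEq_iff_dvd' (by omega)).mp (hnmod.trans hmod.symm)
    obtain ⟨k, hk⟩ := hdvd
    have hk' : N = n + (n-1) * k := by omega
    have hk1 : 1 ≤ k := by
      rcases Nat.eq_zero_or_pos k with h | h
      · subst h; simp at hk'; omega
      · exact h
    have hN2 : 2 * n - 1 ≤ N := by
      have h1 : (n-1) * 1 ≤ (n-1) * k := Nat.mul_le_mul_left _ hk1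
      omega
    rcases eq_or_lt_of_le hN2 with hN2e | hN2l
    · -- N = 2n - 1 : use hrec once then hassoc
      set l := a ++ b.take (n - a.length) with hl
      set r := b.drop (n - a.length) ++ c with hr
      have hal : a.length ≤ n - 1 := by omega
      have hll : l.length = n := by
        simp only [hl, List.length_append, List.length_take]; omega
      have hrl : r.length = n - 1 := by
        simp only [hr, List.length_append, List.length_drop]; omega
      have hsplit : l ++ r = a ++ b ++ c := by
        simp only [hl, hr, List.append_assoc]
        rw [← List.append_assoc (b.take _), List.take_append_drop]
      have h1 : g (a ++ b ++ c) = g (g l :: r) := by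
        rw [← hsplit]
        refine hrec l r ?_ (by rw [hll]; exact hnmod) hrl
        intro h; have := congrArg List.length h; rw [hll] at this; simp at this; omega
      have h2 : g ([] ++ g l :: r) = g (a ++ g b :: c) := by
        apply hassoc [] l r a b c (by simpa using hsplit) hll hb
        simp only [List.nil_append, hsplit, List.length_append]
        omega
      rw [h1]; simpa using h2
    · -- N > 2n - 1
      have hk2 : 2 ≤ k := by
        by_contra h
        have h1 : (n-1) * k ≤ (n-1) * 1 := Nat.mul_le_mul_left _ (by omega)
        omega
      have hac : 2 * (n - 1) ≤ a.length + c.length := by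
        have h1 : (n-1) * 2 ≤ (n-1) * k := Nat.mul_le_mul_left _ hk2
        omega
      rcases lt_or_ge c.length (n - 1) with hc | hc
      · -- c is short: a.length ≥ n, move a block of a
        have han : n ≤ a.length := by omega
        set m := a.take n with hm
        set a₂ := a.drop n with ha2
        have hml : m.length = n := by simp [hm]; omega
        have hma : m ++ a₂ = a := List.take_append_drop n a
        have eq1 : g ([] ++ m ++ (a₂ ++ b ++ c)) = g ([] ++ g m :: (a₂ ++ b ++ c)) := by
          apply ihA 0 (by omega) [] m (a₂ ++ b ++ c) rfl hml _ hmod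
          simp only [List.nil_append, List.length_append, ha2, List.length_drop]
          omega
        have eq2 : g ((g m :: a₂) ++ b ++ c) = g ((g m :: a₂) ++ g b :: c) := by
          apply ihN (N - (n-1)) (by omega) (a₂.length + 1) (g m :: a₂) b c
            (by simp) hb _ (hsub _ (by omega) ⟨1, by omega⟩)
          simp only [List.length_append, List.length_cons, ha2, List.length_drop]
          omega
        have eq3 : g ([] ++ m ++ (a₂ ++ g b :: c)) = g ([] ++ g m :: (a₂ ++ g b :: c)) := by
          apply ihN (N - (n-1)) (by omega) 0 [] m (a₂ ++ g b :: c) rfl hml _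
            (hsub _ (by omega) ⟨1, by omega⟩)
          simp only [List.nil_append, List.length_append, List.length_cons, ha2,
            List.length_drop]
          omega
        calc g (a ++ b ++ c) = g ([] ++ m ++ (a₂ ++ b ++ c)) := by
              rw [← hma]; simp [List.append_assoc]
          _ = g ([] ++ g m :: (a₂ ++ b ++ c)) := eq1
          _ = g ((g m :: a₂) ++ b ++ c) := by simp [List.append_assoc]
          _ = g ((g m :: a₂) ++ g b :: c) := eq2
          _ = g ([] ++ g m :: (a₂ ++ g b :: c)) := by simp [List.append_assoc]
          _ = g ([] ++ m ++ (a₂ ++ g b :: c)) := eq3.symm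
          _ = g (a ++ g b :: c) := by rw [← hma]; simp [List.append_assoc]
      · -- c is long: peel the last n-1 elements
        set c' := c.take (c.length - (n-1)) with hc'
        set r := c.drop (c.length - (n-1)) with hrr
        have hcr : c' ++ r = c := List.take_append_drop _ c
        have hc'l : c'.length = c.length - (n-1) := by simp [hc']
        have hrl : r.length = n - 1 := by simp [hrr]; omega
        have step1 : g (a ++ b ++ c) = g (g (a ++ b ++ c') :: r) := by
          rw [← hcr, ← List.append_assoc]
          refine hrec _ r ?_ ?_ hrl
          · intro h; have := congrArg List.length h
            simp only [List.length_append, List.length_nil] at this; omega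
          · simp only [List.length_append]
            rw [show a.length + b.length + c'.length = N - (n-1) by omega]
            exact hsub _ (by omega) ⟨1, by omega⟩
        have step2 : g (a ++ b ++ c') = g (a ++ g b :: c') := by
          apply ihN (N - (n-1)) (by omega) A a b c' ha hb _
            (hsub _ (by omega) ⟨1, by omega⟩)
          simp only [List.length_append]; omega
        have step3 : g ((a ++ g b :: c') ++ r) = g (g (a ++ g b :: c') :: r) := by
          refine hrec _ r (by simp) ?_ hrl
          simp only [List.length_append, List.length_cons]
          rw [show a.length + (c'.length + 1) = N - (n-1) - (n-1) by omega]
          exact hsub _ (by omega) ⟨2, by omega⟩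
        calc g (a ++ b ++ c) = g (g (a ++ b ++ c') :: r) := step1
          _ = g (g (a ++ g b :: c') :: r) := by rw [step2]
          _ = g ((a ++ g b :: c') ++ r) := step3.symm
          _ = g (a ++ g b :: c) := by rw [← hcr]; simp [List.append_assoc]

private lemma auxL {α : Type*} (n : ℕ) (g : List α → α) (hn : 2 ≤ n)
    (hassoc : ∀ x y z x' y' z' : List α, x ++ y ++ z = x' ++ y' ++ z' →
      y.length = n → y'.length = n → (x ++ y ++ z).length = 2 * n - 1 →
      g (x ++ g y :: z) = g (x' ++ g y' :: z'))
    (hg1 : ∀ a : α, g [a] = a)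
    (hrec : ∀ l r : List α, l ≠ [] → l.length % (n - 1) = 1 % (n - 1) →
      r.length = n - 1 → g (l ++ r) = g (g l :: r)) :
    ∀ B (a b c : List α), b.length = B → b ≠ [] →
      b.length % (n - 1) = 1 % (n - 1) →
      (a ++ b ++ c).length % (n - 1) = 1 % (n - 1) →
      g (a ++ b ++ c) = g (a ++ g b :: c) := by
  have hnmod : n % (n - 1) = 1 % (n - 1) := by
    conv_lhs => rw [show n = (n-1)+1 by omega]
    exact Nat.add_mod_left _ _
  intro B
  induction B using Nat.strong_induction_on with
  | _ B ih =>
  intro a b c hB hbne hbmod hmod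
  have hB1 : 1 ≤ B := by
    rw [← hB]; exact List.length_pos_iff.mpr hbne
  rcases eq_or_lt_of_le hB1 with hB1e | hB1l
  · -- b is a singleton
    obtain ⟨x, hx⟩ : ∃ x, b = [x] := by
      cases b with
      | nil => simp at hbne
      | cons y t =>
        cases t with
        | nil => exact ⟨y, rfl⟩
        | cons z t' => simp [← hB1e] at hB
    subst hx
    rw [hg1 x]
    simp
  · -- B ≥ n
    have hBn : n ≤ B := by
      have h1 : (1:ℕ) ≡ B [MOD n-1] := (hB ▸ hbmod).symm
      have h2 : (n-1) ∣ (B - 1) := (Nat.modEq_iff_dvd' (by omega)).mp h1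
      have h3 := Nat.le_of_dvd (by omega) h2
      omega
    set b' := b.take (B - (n-1)) with hb'
    set r := b.drop (B - (n-1)) with hr
    have hbr : b' ++ r = b := List.take_append_drop _ b
    have hb'l : b'.length = B - (n-1) := by simp [hb']; omega
    have hrl : r.length = n - 1 := by simp [hr]; omega
    have hb'mod : b'.length % (n-1) = 1 % (n-1) := by
      rw [hb'l]
      have hd : (n-1) ∣ B - (B - (n-1)) := ⟨1, by omega⟩
      have h1 : B - (n-1) ≡ B [MOD n-1] := (Nat.modEq_iff_dvd' (by omega)).mpr hd
      exact h1.trans (hB ▸ hbmod)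
    have hgb : g b = g (g b' :: r) := by
      rw [← hbr]
      refine hrec b' r ?_ hb'mod hrl
      intro h; have := congrArg List.length h; rw [hb'l] at this; simp at this; omega
    have ih1 : g (a ++ b' ++ (r ++ c)) = g (a ++ g b' :: (r ++ c)) := by
      refine ih (B - (n-1)) (by omega) a b' (r ++ c) hb'l ?_ hb'mod ?_
      · intro h; have := congrArg List.length h; rw [hb'l] at this; simp at this; omega
      · have h1 : (a ++ b' ++ (r ++ c)).length = (a ++ b ++ c).length := by
          simp only [List.length_append]; omega
        rw [h1]; exact hmod
    have hC : g (a ++ (g b' :: r) ++ c) = g (a ++ g (g b' :: r) :: c) := by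
      refine auxC n g hn hassoc hg1 hrec _ a.length a (g b' :: r) c rfl
        (by simp [hrl]; omega) rfl ?_
      have hlen : (a ++ (g b' :: r) ++ c).length = a.length + c.length + n := by
        simp only [List.length_append, List.length_cons, hrl]; omega
      rw [hlen]
      have h1 : a.length + c.length + n ≡ a.length + c.length + B [MOD n-1] :=
        Nat.ModEq.add_left _ (hnmod.trans (hB ▸ hbmod).symm)
      have h2 : (a.length + c.length + B) % (n-1) = 1 % (n-1) := by
        rw [show a.length + c.length + B = (a ++ b ++ c).length by
          simp only [List.length_append]; omega]
        exact hmod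
      exact h1.trans h2
    calc g (a ++ b ++ c) = g (a ++ b' ++ (r ++ c)) := by
          rw [← hbr]; simp [List.append_assoc]
      _ = g (a ++ g b' :: (r ++ c)) := ih1
      _ = g (a ++ (g b' :: r) ++ c) := by simp [List.append_assoc]
      _ = g (a ++ g (g b' :: r) :: c) := hC
      _ = g (a ++ g b :: c) := by rw [← hgb]

private lemma auxM {α : Type*} (n : ℕ) (g : List α → α) (hn : 2 ≤ n)
    (hassoc : ∀ x y z x' y' z' : List α, x ++ y ++ z = x' ++ y' ++ z' →
      y.length = n → y'.length = n → (x ++ y ++ z).length = 2 * n - 1 →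
      g (x ++ g y :: z) = g (x' ++ g y' :: z'))
    (hg1 : ∀ a : α, g [a] = a)
    (hrec : ∀ l r : List α, l ≠ [] → l.length % (n - 1) = 1 % (n - 1) →
      r.length = n - 1 → g (l ++ r) = g (g l :: r)) :
    ∀ (L : List (List α)) (acc : List α),
      (∀ x ∈ L, x ≠ [] ∧ x.length % (n-1) = 1 % (n-1)) →
      (acc ++ L.flatten).length % (n-1) = 1 % (n-1) →
      g (acc ++ L.flatten) = g (acc ++ L.map g) := by
  intro L
  induction L with
  | nil => intro acc _ _; simp
  | cons b L' ih =>
    intro acc hmem hmod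
    obtain ⟨hbne, hbmod⟩ := hmem b (by simp)
    have h1 : g (acc ++ b ++ L'.flatten) = g (acc ++ g b :: L'.flatten) := by
      refine auxL n g hn hassoc hg1 hrec b.length acc b L'.flatten rfl hbne hbmod ?_
      rw [show (acc ++ b ++ L'.flatten).length = (acc ++ (b :: L').flatten).length by
        simp [List.length_append]]
      exact hmod
    have h2 : g ((acc ++ [g b]) ++ L'.flatten) = g ((acc ++ [g b]) ++ L'.map g) := by
      refine ih (acc ++ [g b]) (fun x hx => hmem x (by simp [hx])) ?_
      have hlen : ((acc ++ [g b]) ++ L'.flatten).length ≡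
          (acc ++ (b :: L').flatten).length [MOD n-1] := by
        simp only [List.length_append, List.flatten_cons, List.length_cons,
          List.length_nil]
        have hb1 : (1 : ℕ) ≡ b.length [MOD n-1] := hbmod.symm
        calc acc.length + (1 + 0) + L'.flatten.length
            ≡ acc.length + (b.length + 0) + L'.flatten.length [MOD n-1] := by
              exact Nat.ModEq.add_right _ (Nat.ModEq.add_left _
                (Nat.ModEq.add_right _ hb1))
          _ = acc.length + (b.length + L'.flatten.length) := by omega
      exact hlen.trans hmod
    calc g (acc ++ (b :: L').flatten) = g (acc ++ b ++ L'.flatten) := by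
          simp [List.append_assoc]
      _ = g (acc ++ g b :: L'.flatten) := h1
      _ = g ((acc ++ [g b]) ++ L'.flatten) := by simp
      _ = g ((acc ++ [g b]) ++ L'.map g) := h2
      _ = g (acc ++ (b :: L').map g) := by simp



/-- Proposition 2.5, (i) ⟹ (iv) for the `n`-associative extension: if `g` restricted
to length-`n` strings is an associative `n`-ary operation `f`, `g₁ = id`, and `g` is
defined on strings of length `≡ 1 (mod n-1)` by the left-nested recursion
`g_m(x₁⋯x_m) = f(g_{m-n+1}(x₁⋯x_{m-n+1}), x_{m-n+2}, …, x_m)`, then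
`g(g(x₁)⋯g(xₙ)) = g(x₁⋯xₙ)` for all strings `x₁, …, xₙ` of lengths in `Aₙ`. -/
theorem stmt_10 {α : Type*} [Nonempty α] (n : ℕ) (hn : 2 ≤ n) (g : List α → α)
    -- the restriction of g to length-n strings (= f) is associative
    (hassoc : ∀ x y z x' y' z' : List α, x ++ y ++ z = x' ++ y' ++ z' →
      y.length = n → y'.length = n → (x ++ y ++ z).length = 2 * n - 1 →
      g (x ++ g y :: z) = g (x' ++ g y' :: z'))
    -- g₁ = id
    (hg1 : ∀ a : α, g [a] = a)
    -- left-nested recursion (4)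
    (hrec : ∀ l r : List α, l ≠ [] → l.length % (n - 1) = 1 % (n - 1) →
      r.length = n - 1 → g (l ++ r) = g (g l :: r)) :
    ∀ l : Fin n → List α, (∀ i, l i ≠ []) →
      (∀ i, (l i).length % (n - 1) = 1 % (n - 1)) →
      g (List.ofFn fun i => g (l i)) = g (List.flatten (List.ofFn l)) := by
  intro l hne hmodl
  have hnmod : n % (n - 1) = 1 % (n - 1) := by
    conv_lhs => rw [show n = (n-1)+1 by omega]
    exact Nat.add_mod_left _ _
  -- length of the flatten is ≡ 1 mod n-1
  have key : ∀ L : List (List α), (∀ x ∈ L, x.length % (n-1) = 1 % (n-1)) →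
      L.flatten.length ≡ L.length [MOD n-1] := by
    intro L
    induction L with
    | nil => intro _; rfl
    | cons b L' ih =>
      intro h
      simp only [List.flatten_cons, List.length_append, List.length_cons]
      calc b.length + L'.flatten.length ≡ 1 + L'.length [MOD n-1] :=
            Nat.ModEq.add (h b (by simp)) (ih fun x hx => h x (by simp [hx]))
        _ = L'.length + 1 := Nat.add_comm _ _
  have hflat : (List.ofFn l).flatten.length % (n-1) = 1 % (n-1) := by
    have h1 := key (List.ofFn l) (by
      intro x hx
      obtain ⟨i, hi⟩ := List.mem_ofFn.mp hx
      exact hi ▸ hmodl i)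
    have h2 : (List.ofFn l).length = n := by simp
    rw [h2] at h1
    exact h1.trans hnmod
  have hM := auxM n g hn hassoc hg1 hrec (List.ofFn l) []
    (by
      intro x hx
      obtain ⟨i, hi⟩ := List.mem_ofFn.mp hx
      exact hi ▸ ⟨hne i, hmodl i⟩)
    (by simpa using hflat)
  simp only [List.nil_append] at hM
  rw [List.map_ofFn] at hM
  exact hM.symm
end

section
/- Let n ≥ 2 and S = {(p-q)/k : k, p, q+1 ∈ Aₙ} where Aₙ = {m ∈ ℕ : m ≡ 1 (mod n-1)}. Then any two elements r, r' of S admit representations with a common denominator and common subtrahend: there exist k, p, p', q with k, p, p', q+1 ∈ Aₙ such that r = (p-q)/k and r' = (p'-q)/k. -/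
/-- Claim 6: any two elements `r, r'` of `S = {(p-q)/k : k, p, q+1 ∈ Aₙ}` admit
representations with a common denominator `k` and common subtrahend `q`. -/
theorem stmt_12 (n : ℕ) (hn : 2 ≤ n) (r r' : ℝ)
    (hr : ∃ k p q : ℕ, 1 ≤ k ∧ 1 ≤ p ∧
      k % (n - 1) = 1 % (n - 1) ∧ p % (n - 1) = 1 % (n - 1) ∧ q % (n - 1) = 0 ∧
      r = ((p : ℝ) - (q : ℝ)) / (k : ℝ))
    (hr' : ∃ k p q : ℕ, 1 ≤ k ∧ 1 ≤ p ∧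
      k % (n - 1) = 1 % (n - 1) ∧ p % (n - 1) = 1 % (n - 1) ∧ q % (n - 1) = 0 ∧
      r' = ((p : ℝ) - (q : ℝ)) / (k : ℝ)) :
    ∃ k p p' q : ℕ, 1 ≤ k ∧ 1 ≤ p ∧ 1 ≤ p' ∧
      k % (n - 1) = 1 % (n - 1) ∧ p % (n - 1) = 1 % (n - 1) ∧
      p' % (n - 1) = 1 % (n - 1) ∧ q % (n - 1) = 0 ∧
      r = ((p : ℝ) - (q : ℝ)) / (k : ℝ) ∧ r' = ((p' : ℝ) - (q : ℝ)) / (k : ℝ) := by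
  obtain ⟨k₁, p₁, q₁, hk₁, hp₁, hk₁m, hp₁m, hq₁m, hr1⟩ := hr
  obtain ⟨k₂, p₂, q₂, hk₂, hp₂, hk₂m, hp₂m, hq₂m, hr2⟩ := hr'
  have K1 : k₁ ≡ 1 [MOD n-1] := hk₁m
  have K2 : k₂ ≡ 1 [MOD n-1] := hk₂m
  have P1 : p₁ ≡ 1 [MOD n-1] := hp₁m
  have P2 : p₂ ≡ 1 [MOD n-1] := hp₂m
  have Q1 : q₁ ≡ 0 [MOD n-1] := by unfold Nat.ModEq; simp [hq₁m]
  have Q2 : q₂ ≡ 0 [MOD n-1] := by unfold Nat.ModEq; simp [hq₂m]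
  have h1 : (k₁ : ℝ) ≠ 0 := by exact_mod_cast Nat.one_le_iff_ne_zero.mp hk₁
  have h2 : (k₂ : ℝ) ≠ 0 := by exact_mod_cast Nat.one_le_iff_ne_zero.mp hk₂
  refine ⟨k₁ * k₂, p₁ * k₂ + q₂ * k₁, p₂ * k₁ + q₁ * k₂, q₁ * k₂ + q₂ * k₁,
    Nat.one_le_iff_ne_zero.mpr (by positivity),
    le_add_right (Nat.one_le_iff_ne_zero.mpr (by positivity)),
    le_add_right (Nat.one_le_iff_ne_zero.mpr (by positivity)), ?_, ?_, ?_, ?_, ?_, ?_⟩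
  · exact ((K1.mul K2).trans (by norm_num [Nat.ModEq]) : k₁*k₂ ≡ 1 [MOD n-1])
  · exact (((P1.mul K2).add (Q2.mul K1)).trans (by norm_num [Nat.ModEq]) :
      p₁*k₂ + q₂*k₁ ≡ 1 [MOD n-1])
  · exact (((P2.mul K1).add (Q1.mul K2)).trans (by norm_num [Nat.ModEq]) :
      p₂*k₁ + q₁*k₂ ≡ 1 [MOD n-1])
  · have : q₁*k₂ + q₂*k₁ ≡ 0 [MOD n-1] :=
      ((Q1.mul K2).add (Q2.mul K1)).trans (by norm_num [Nat.ModEq])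
    simpa [Nat.ModEq] using this
  · subst hr1; push_cast; field_simp; ring
  · subst hr2; push_cast; field_simp; ring
end

section
/- Let I be a nontrivial real interval, f : Iⁿ → I continuous, symmetric, cancellative, and associative, g its n-associative extension with g₁ = id, and c ∈ I with c < f(cⁿ). For x ∈ I and j, k, p, q ∈ ℕ with j+1, k, p, q+1 ∈ Aₙ: g(c^p) > g(x c^q) if and only if g(c^(kp)) > g(x^k c^(kq)), and also if and only if g(c^(p+j)) > g(x c^(q+j)); the same equivalences hold with '<' or '=' in place of '>'. -/
namespace Stmt13


/-- replace coordinate `m` (as a natural number) of `y` by `t` -/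
def upd (n : ℕ) (y : Fin n → ℝ) (m : ℕ) (t : ℝ) : Fin n → ℝ :=
  fun j => if (j : ℕ) = m then t else y j

/-- translation by `d` : `u ↦ f(u, d, d, ..., d)` -/
def Tr (n : ℕ) (f : (Fin n → ℝ) → ℝ) (d u : ℝ) : ℝ := f (upd n (fun _ => d) 0 u)

lemma upd_mem {n : ℕ} {I : Set ℝ} {y : Fin n → ℝ} (hy : ∀ i, y i ∈ I) {m : ℕ} {t : ℝ}
    (ht : t ∈ I) : ∀ i, upd n y m t i ∈ I := by
  intro i; unfold upd; split <;> simp [*]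

lemma Tr_mem {n : ℕ} {I : Set ℝ} {f : (Fin n → ℝ) → ℝ}
    (hmap : ∀ x : Fin n → ℝ, (∀ i, x i ∈ I) → f x ∈ I) {d u : ℝ}
    (hd : d ∈ I) (hu : u ∈ I) : Tr n f d u ∈ I :=
  hmap _ (upd_mem (fun _ => hd) hu)

lemma Tr_iter_mem {n : ℕ} {I : Set ℝ} {f : (Fin n → ℝ) → ℝ}
    (hmap : ∀ x : Fin n → ℝ, (∀ i, x i ∈ I) → f x ∈ I) {d u : ℝ}
    (hd : d ∈ I) (hu : u ∈ I) (s : ℕ) : (Tr n f d)^[s] u ∈ I := by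
  induction s with
  | zero => simpa
  | succ s ih => rw [Function.iterate_succ_apply']; exact Tr_mem hmap hd ih

/-- cancellation in one coordinate, `upd` form -/
lemma canc_upd {n : ℕ} {I : Set ℝ} {f : (Fin n → ℝ) → ℝ} (hcanc : CancOn n I f)
    {m : ℕ} (hm : m < n) {y : Fin n → ℝ} (hy : ∀ i, y i ∈ I) {t t' : ℝ}
    (ht : t ∈ I) (ht' : t' ∈ I) (h : f (upd n y m t) = f (upd n y m t')) : t = t' := by
  have key := hcanc ⟨m, hm⟩ (upd n y m t) (upd n y m t') (upd_mem hy ht) (upd_mem hy ht')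
    (fun i hi => by
      have : (i : ℕ) ≠ m := fun hh => hi (Fin.ext hh)
      simp [upd, this]) h
  simpa [upd] using key
lemma comb_mem {I : Set ℝ} (hI : I.OrdConnected) {a b s : ℝ}
    (ha : a ∈ I) (hb : b ∈ I) (h0 : 0 ≤ s) (h1 : s ≤ 1) : (1 - s) * a + s * b ∈ I := by
  rcases le_total a b with h | h
  · exact hI.out ha hb ⟨by nlinarith, by nlinarith⟩
  · exact hI.out hb ha ⟨by nlinarith, by nlinarith⟩

lemma comb_lt {t1 t1' t2 t2' s : ℝ} (h1 : t1 < t1') (h2 : t2 < t2')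
    (h0 : 0 ≤ s) (hs1 : s ≤ 1) : (1 - s) * t1 + s * t2 < (1 - s) * t1' + s * t2' := by
  rcases eq_or_lt_of_le h0 with rfl | hpos
  · simpa using h1
  · nlinarith [mul_nonneg (sub_nonneg.mpr hs1) (sub_pos.mpr h1).le,
      mul_pos hpos (sub_pos.mpr h2)]

lemma sign_transfer {n : ℕ} {I : Set ℝ} {f : (Fin n → ℝ) → ℝ} (hn : 2 ≤ n)
    (hI : I.OrdConnected)
    (hcont : ContinuousOn f {x | ∀ i, x i ∈ I}) (hcanc : CancOn n I f)
    {y1 y2 : Fin n → ℝ} (hy1 : ∀ i, y1 i ∈ I) (hy2 : ∀ i, y2 i ∈ I)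
    {t1 t1' t2 t2' : ℝ} (ht1 : t1 ∈ I) (ht1' : t1' ∈ I) (ht2 : t2 ∈ I) (ht2' : t2' ∈ I)
    (h1 : t1 < t1') (h2 : t2 < t2')
    (hpos : f (upd n y1 0 t1) < f (upd n y1 0 t1')) :
    f (upd n y2 0 t2) < f (upd n y2 0 t2') := by
  have h0n : 0 < n := by omega
  by_contra hcon
  have hneq : f (upd n y2 0 t2) ≠ f (upd n y2 0 t2') := fun he =>
    h2.ne (canc_upd hcanc h0n hy2 ht2 ht2' he)
  have hgt : f (upd n y2 0 t2') < f (upd n y2 0 t2) :=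
    lt_of_le_of_ne (not_lt.mp hcon) (Ne.symm hneq)
  set Y : ℝ → Fin n → ℝ := fun s j => (1 - s) * y1 j + s * y2 j with hY
  set A : ℝ → Fin n → ℝ := fun s => upd n (Y s) 0 ((1 - s) * t1 + s * t2) with hA
  set B : ℝ → Fin n → ℝ := fun s => upd n (Y s) 0 ((1 - s) * t1' + s * t2') with hB
  have hcA : Continuous A := by
    apply continuous_pi
    intro j
    by_cases hj : (j : ℕ) = 0 <;> simp only [hA, upd, hY, hj, if_true, if_false] <;> fun_prop
  have hcB : Continuous B := by
    apply continuous_pi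
    intro j
    by_cases hj : (j : ℕ) = 0 <;> simp only [hB, upd, hY, hj, if_true, if_false] <;> fun_prop
  have hmA : ∀ s ∈ Set.Icc (0:ℝ) 1, A s ∈ {x : Fin n → ℝ | ∀ i, x i ∈ I} := by
    intro s hs
    exact upd_mem (fun i => comb_mem hI (hy1 i) (hy2 i) hs.1 hs.2)
      (comb_mem hI ht1 ht2 hs.1 hs.2)
  have hmB : ∀ s ∈ Set.Icc (0:ℝ) 1, B s ∈ {x : Fin n → ℝ | ∀ i, x i ∈ I} := by
    intro s hs
    exact upd_mem (fun i => comb_mem hI (hy1 i) (hy2 i) hs.1 hs.2)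
      (comb_mem hI ht1' ht2' hs.1 hs.2)
  set h : ℝ → ℝ := fun s => f (B s) - f (A s) with hh
  have hch : ContinuousOn h (Set.Icc 0 1) :=
    ((hcont.comp hcB.continuousOn hmB).sub (hcont.comp hcA.continuousOn hmA))
  have hA0 : A 0 = upd n y1 0 t1 := by
    funext j; simp only [hA, hB, hY, upd]; by_cases hj : (j:ℕ) = 0 <;> simp [hj] <;> ring
  have hB0 : B 0 = upd n y1 0 t1' := by funext j; simp only [hA, hB, hY, upd]; by_cases hj : (j:ℕ) = 0 <;> simp [hj] <;> ring
  have hA1 : A 1 = upd n y2 0 t2 := by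
    funext j; simp only [hA, hB, hY, upd]; by_cases hj : (j:ℕ) = 0 <;> simp [hj] <;> ring
  have hB1 : B 1 = upd n y2 0 t2' := by funext j; simp only [hA, hB, hY, upd]; by_cases hj : (j:ℕ) = 0 <;> simp [hj] <;> ring
  have h0pos : 0 < h 0 := by simp only [hh, hA0, hB0]; linarith
  have h1neg : h 1 < 0 := by simp only [hh, hA1, hB1]; linarith
  have := intermediate_value_Icc' (by norm_num : (0:ℝ) ≤ 1) hch
  have h0mem : (0:ℝ) ∈ Set.Icc (h 1) (h 0) := ⟨h1neg.le, h0pos.le⟩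
  obtain ⟨s, hs, hszero⟩ := this h0mem
  have hfeq : f (A s) = f (B s) := by
    have : f (B s) - f (A s) = 0 := hszero
    linarith
  have hlt : (1 - s) * t1 + s * t2 < (1 - s) * t1' + s * t2' := comb_lt h1 h2 hs.1 hs.2
  have := canc_upd hcanc h0n (y := Y s) (fun i => comb_mem hI (hy1 i) (hy2 i) hs.1 hs.2)
    (comb_mem hI ht1 ht2 hs.1 hs.2) (comb_mem hI ht1' ht2' hs.1 hs.2) hfeq
  exact absurd this hlt.ne

/-- `f` is strictly increasing in coordinate 0. -/
lemma slot0 {n : ℕ} {I : Set ℝ} {f : (Fin n → ℝ) → ℝ} (hn : 2 ≤ n) (hI : I.OrdConnected)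
    (hne : ∃ a ∈ I, ∃ b ∈ I, a ≠ b)
    (hmap : ∀ x : Fin n → ℝ, (∀ i, x i ∈ I) → f x ∈ I)
    (hcont : ContinuousOn f {x | ∀ i, x i ∈ I})
    (hcanc : CancOn n I f) (hassoc : NAssocOn n I f) :
    ∀ y : Fin n → ℝ, (∀ i, y i ∈ I) → ∀ t ∈ I, ∀ t' ∈ I, t < t' →
      f (upd n y 0 t) < f (upd n y 0 t') := by
  have h0n : 0 < n := by omega
  obtain ⟨a0, ha0, b0, hb0, hab0⟩ := hne
  obtain ⟨u, v, hu, hv, huv⟩ : ∃ u v, u ∈ I ∧ v ∈ I ∧ u < v := by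
    rcases hab0.lt_or_gt with h | h
    exacts [⟨a0, b0, ha0, hb0, h⟩, ⟨b0, a0, hb0, ha0, h⟩]
  set y0 : Fin n → ℝ := fun _ => u with hy0
  have hy0m : ∀ i, y0 i ∈ I := fun _ => hu
  rcases lt_trichotomy (f (upd n y0 0 u)) (f (upd n y0 0 v)) with hbase | heq | hbase
  · intro y hy t ht t' ht' htt
    exact sign_transfer hn hI hcont hcanc hy0m hy hu hv ht ht' huv htt hbase
  · exact absurd (canc_upd hcanc h0n hy0m hu hv heq) huv.ne
  · -- the strictly decreasing case: contradiction with associativity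
    exfalso
    have hanti : ∀ (y : Fin n → ℝ), (∀ i, y i ∈ I) → ∀ t ∈ I, ∀ t' ∈ I, t < t' →
        f (upd n y 0 t') < f (upd n y 0 t) := by
      intro y hy t ht t' ht' htt
      by_contra hcon
      have hneq : f (upd n y 0 t) ≠ f (upd n y 0 t') := fun he =>
        htt.ne (canc_upd hcanc h0n hy ht ht' he)
      have : f (upd n y 0 t) < f (upd n y 0 t') :=
        lt_of_le_of_ne (not_lt.mp hcon) hneq
      exact absurd (sign_transfer hn hI hcont hcanc hy hy0m ht ht' hu hv htt huv this)
        (not_lt.mpr hbase.le)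
    set d := u with hd
    have hdm : d ∈ I := hu
    set e := f (fun _ => d) with he
    have hem : e ∈ I := hmap _ (fun _ => hdm)
    set X : ℝ → ℕ → ℝ := fun t m => if m = 0 then t else d with hX
    have hXm : ∀ t, t ∈ I → ∀ j, j < 2 * n - 1 → X t j ∈ I := by
      intro t ht j _; simp only [hX]; split <;> assumption
    set w : Fin n → ℝ := fun j => if (j : ℕ) = 1 then e else d with hw
    have hwm : ∀ i, w i ∈ I := by intro i; simp only [hw]; split <;> assumption
    have key : ∀ t, t ∈ I →
        f (upd n (fun _ => d) 0 (f (upd n (fun _ => d) 0 t))) = f (upd n w 0 t) := by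
      intro t ht
      have h := hassoc (X t) (hXm t ht) 0 (by omega)
      have e1 : (fun j : Fin n => if (j : ℕ) < 0 then X t j
          else if (j : ℕ) = 0 then f (fun l : Fin n => X t (0 + (l : ℕ)))
          else X t ((j : ℕ) + n - 1)) = upd n (fun _ => d) 0 (f (upd n (fun _ => d) 0 t)) := by
        funext j
        have hinner : (fun l : Fin n => X t (0 + (l : ℕ))) = upd n (fun _ => d) 0 t := by
          funext l; simp only [hX, upd, Nat.zero_add]
        rw [hinner]
        simp only [upd, hX, Nat.not_lt_zero, if_false]
        by_cases hj : (j : ℕ) = 0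
        · simp [hj]
        · have : (j : ℕ) + n - 1 ≠ 0 := by omega
          simp [hj, this]
      have e2 : (fun j : Fin n => if (j : ℕ) < 0 + 1 then X t j
          else if (j : ℕ) = 0 + 1 then f (fun l : Fin n => X t (0 + 1 + (l : ℕ)))
          else X t ((j : ℕ) + n - 1)) = upd n w 0 t := by
        funext j
        have hinner : (fun l : Fin n => X t (0 + 1 + (l : ℕ))) = (fun _ : Fin n => d) := by
          funext l; simp only [hX]
          have : 0 + 1 + (l : ℕ) ≠ 0 := by omega
          simp [this]
        rw [hinner]
        simp only [upd, hw, hX]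
        by_cases hj0 : (j : ℕ) = 0
        · simp [hj0]
        · by_cases hj1 : (j : ℕ) = 1
          · simp [hj0, hj1, ← he]
          · have h1 : ¬ ((j : ℕ) < 0 + 1) := by omega
            have h2 : (j : ℕ) + n - 1 ≠ 0 := by omega
            simp [hj0, hj1, h1, h2, ← he]
      rw [e1, e2] at h
      exact h
    have hiu : f (upd n (fun _ => d) 0 u) ∈ I := hmap _ (upd_mem (fun _ => hdm) hu)
    have hiv : f (upd n (fun _ => d) 0 v) ∈ I := hmap _ (upd_mem (fun _ => hdm) hv)
    have hinner_lt : f (upd n (fun _ => d) 0 v) < f (upd n (fun _ => d) 0 u) :=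
      hanti _ (fun _ => hdm) u hu v hv huv
    have hL : f (upd n (fun _ => d) 0 (f (upd n (fun _ => d) 0 u)))
        < f (upd n (fun _ => d) 0 (f (upd n (fun _ => d) 0 v))) :=
      hanti _ (fun _ => hdm) _ hiv _ hiu hinner_lt
    have hR : f (upd n w 0 v) < f (upd n w 0 u) := hanti _ hwm u hu v hv huv
    rw [key u hu, key v hv] at hL
    exact absurd (hL.trans hR) (lt_irrefl _)


/-- strict monotonicity in every coordinate (statement takes the slot-0 version). -/
lemma slotm {n : ℕ} {I : Set ℝ} {f : (Fin n → ℝ) → ℝ} (hsym : SymmOn n I f)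
    (h0 : ∀ y : Fin n → ℝ, (∀ i, y i ∈ I) → ∀ t ∈ I, ∀ t' ∈ I, t < t' →
      f (upd n y 0 t) < f (upd n y 0 t'))
    {m : ℕ} (hm : m < n) {y : Fin n → ℝ} (hy : ∀ i, y i ∈ I)
    {t t' : ℝ} (ht : t ∈ I) (ht' : t' ∈ I) (htt : t < t') :
    f (upd n y m t) < f (upd n y m t') := by
  have h0n : 0 < n := by omega
  set i0 : Fin n := ⟨0, h0n⟩ with hi0
  set im : Fin n := ⟨m, hm⟩ with him
  set σ : Equiv.Perm (Fin n) := Equiv.swap i0 im with hσ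
  have key : ∀ s : ℝ, upd n (y ∘ σ) 0 s = (upd n y m s) ∘ σ := by
    intro s
    funext j
    by_cases hj : j = i0
    · subst hj
      simp [upd, hσ, hi0, him, Equiv.swap_apply_left]
    · have hjv : (j : ℕ) ≠ 0 := fun h => hj (Fin.ext h)
      have hσj : σ j ≠ im := by
        intro h
        exact hj (by simpa [hσ] using congrArg σ h)
      have hσjv : ((σ j : Fin n) : ℕ) ≠ m := fun h => hσj (Fin.ext h)
      simp only [upd, Function.comp_apply, hjv, hσjv, if_false]
  have hmem : ∀ s : ℝ, s ∈ I → ∀ i, upd n y m s i ∈ I := fun s hs => upd_mem hy hs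
  have e1 : f (upd n y m t) = f (upd n (y ∘ σ) 0 t) := by
    rw [key t]; exact (hsym _ (hmem t ht) σ).symm
  have e2 : f (upd n y m t') = f (upd n (y ∘ σ) 0 t') := by
    rw [key t']; exact (hsym _ (hmem t' ht') σ).symm
  rw [e1, e2]
  exact h0 (y ∘ σ) (fun i => hy (σ i)) t ht t' ht' htt

lemma mono_le {n : ℕ} {I : Set ℝ} {f : (Fin n → ℝ) → ℝ} (hsym : SymmOn n I f)
    (h0 : ∀ y : Fin n → ℝ, (∀ i, y i ∈ I) → ∀ t ∈ I, ∀ t' ∈ I, t < t' →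
      f (upd n y 0 t) < f (upd n y 0 t'))
    {w w' : Fin n → ℝ} (hw : ∀ i, w i ∈ I) (hw' : ∀ i, w' i ∈ I)
    (hle : ∀ i, w i ≤ w' i) : f w ≤ f w' := by
  set hyb : ℕ → Fin n → ℝ := fun m j => if (j : ℕ) < m then w' j else w j with hhyb
  have hybmem : ∀ m, ∀ i, hyb m i ∈ I := by
    intro m i; simp only [hhyb]; split; exacts [hw' i, hw i]
  have H : ∀ m, m ≤ n → f w ≤ f (hyb m) := by
    intro m
    induction m with
    | zero =>
      intro _
      have : hyb 0 = w := by funext j; simp [hhyb]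
      rw [this]
    | succ m ih =>
      intro hm1
      have hm : m < n := by omega
      rcases eq_or_lt_of_le (hle ⟨m, hm⟩) with heq | hlt
      · have : hyb (m + 1) = hyb m := by
          funext j
          simp only [hhyb]
          by_cases h1 : (j : ℕ) < m
          · simp [h1, Nat.lt_succ_of_lt h1]
          · by_cases h2 : (j : ℕ) = m
            · have : j = ⟨m, hm⟩ := Fin.ext h2
              subst this
              simp [h1, h2, heq]
            · have h3 : ¬ ((j : ℕ) < m + 1) := by omega
              simp [h1, h3]
        rw [this]
        exact ih hm.le
      · have e1 : upd n (hyb m) m (w ⟨m, hm⟩) = hyb m := by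
          funext j
          simp only [upd, hhyb]
          by_cases h2 : (j : ℕ) = m
          · have : j = ⟨m, hm⟩ := Fin.ext h2
            subst this
            simp [h2]
          · simp [h2]
        have e2 : upd n (hyb m) m (w' ⟨m, hm⟩) = hyb (m + 1) := by
          funext j
          simp only [upd, hhyb]
          by_cases h2 : (j : ℕ) = m
          · have : j = ⟨m, hm⟩ := Fin.ext h2
            subst this
            simp [h2]
          · by_cases h1 : (j : ℕ) < m
            · have h3 : (j : ℕ) < m + 1 := by omega
              simp [h1, h2, h3]
            · have h3 : ¬ ((j : ℕ) < m + 1) := by omega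
              simp [h1, h2, h3]
        have step : f (upd n (hyb m) m (w ⟨m, hm⟩)) < f (upd n (hyb m) m (w' ⟨m, hm⟩)) :=
          slotm hsym h0 hm (hybmem m) (hw _) (hw' _) hlt
        rw [e1, e2] at step
        exact (ih hm.le).trans step.le
  have hn' : hyb n = w' := by
    funext j; simp [hhyb, j.isLt]
  rw [← hn']
  exact H n le_rfl

lemma mono_lt {n : ℕ} {I : Set ℝ} {f : (Fin n → ℝ) → ℝ} (hsym : SymmOn n I f)
    (h0 : ∀ y : Fin n → ℝ, (∀ i, y i ∈ I) → ∀ t ∈ I, ∀ t' ∈ I, t < t' →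
      f (upd n y 0 t) < f (upd n y 0 t'))
    {w w' : Fin n → ℝ} (hw : ∀ i, w i ∈ I) (hw' : ∀ i, w' i ∈ I)
    (hle : ∀ i, w i ≤ w' i) {m : ℕ} (hm : m < n)
    (hstrict : w ⟨m, hm⟩ < w' ⟨m, hm⟩) : f w < f w' := by
  have e1 : upd n w m (w ⟨m, hm⟩) = w := by
    funext j
    simp only [upd]
    by_cases h2 : (j : ℕ) = m
    · have : j = ⟨m, hm⟩ := Fin.ext h2
      subst this; simp [h2]
    · simp [h2]
  have step : f (upd n w m (w ⟨m, hm⟩)) < f (upd n w m (w' ⟨m, hm⟩)) :=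
    slotm hsym h0 hm hw (hw _) (hw' _) hstrict
  rw [e1] at step
  refine step.trans_le (mono_le hsym h0 (upd_mem hw (hw' _)) hw' ?_)
  intro i
  simp only [upd]
  by_cases h2 : (i : ℕ) = m
  · have : i = ⟨m, hm⟩ := Fin.ext h2
    subst this; simp [h2]
  · simp [h2, hle i]

/-- generalized associativity: the inner block can be moved from position 0 to position `n-1`. -/
lemma shift {n : ℕ} {I : Set ℝ} {f : (Fin n → ℝ) → ℝ} (hn : 2 ≤ n)
    (hassoc : NAssocOn n I f) (x : ℕ → ℝ) (hx : ∀ j, j < 2 * n - 1 → x j ∈ I) :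
    f (fun j : Fin n => if (j : ℕ) = 0 then f (fun l : Fin n => x (l : ℕ))
        else x ((j : ℕ) + n - 1)) =
    f (fun j : Fin n => if (j : ℕ) = n - 1 then f (fun l : Fin n => x (n - 1 + (l : ℕ)))
        else x (j : ℕ)) := by
  set Φ : ℕ → ℝ := fun i => f (fun j : Fin n => if (j : ℕ) < i then x j
      else if (j : ℕ) = i then f (fun l : Fin n => x (i + (l : ℕ)))
      else x ((j : ℕ) + n - 1)) with hΦ
  have chain : ∀ i, i ≤ n - 1 → Φ 0 = Φ i := by
    intro i
    induction i with
    | zero => intro _; rfl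
    | succ i ih =>
      intro hi
      have h1 : i + 1 < n := by omega
      exact (ih (by omega)).trans (hassoc x hx i h1)
  have e0 : Φ 0 = f (fun j : Fin n => if (j : ℕ) = 0 then f (fun l : Fin n => x (l : ℕ))
      else x ((j : ℕ) + n - 1)) := by
    simp [hΦ]
  have e1 : Φ (n - 1) = f (fun j : Fin n => if (j : ℕ) = n - 1
      then f (fun l : Fin n => x (n - 1 + (l : ℕ))) else x (j : ℕ)) := by
    simp only [hΦ]
    congr 1
    funext j
    have hj : (j : ℕ) < n := j.isLt
    by_cases h1 : (j : ℕ) < n - 1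
    · have h2 : (j : ℕ) ≠ n - 1 := by omega
      simp [h1, h2]
    · have h2 : (j : ℕ) = n - 1 := by omega
      simp [h1, h2]
  rw [← e0, ← e1]
  exact chain (n - 1) le_rfl

lemma swap0last {n : ℕ} {I : Set ℝ} {f : (Fin n → ℝ) → ℝ} (hn : 2 ≤ n)
    (hsym : SymmOn n I f) {d v : ℝ} (hd : d ∈ I) (hv : v ∈ I) :
    f (upd n (fun _ => d) 0 v) = f (upd n (fun _ => d) (n - 1) v) := by
  have h0n : 0 < n := by omega
  have hn1 : n - 1 < n := by omega
  set i0 : Fin n := ⟨0, h0n⟩ with hi0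
  set im : Fin n := ⟨n - 1, hn1⟩ with him
  set σ : Equiv.Perm (Fin n) := Equiv.swap i0 im with hσ
  have key : (upd n (fun _ => d) (n - 1) v) ∘ σ = upd n (fun _ => d) 0 v := by
    funext j
    by_cases hj : j = i0
    · subst hj
      simp [upd, hσ, hi0, him, Equiv.swap_apply_left]
    · have hjv : (j : ℕ) ≠ 0 := fun h => hj (Fin.ext h)
      have hσj : σ j ≠ im := by
        intro h
        apply hj
        have := congrArg σ h
        simpa [hσ] using this
      have hσjv : ((σ j : Fin n) : ℕ) ≠ n - 1 := fun h => hσj (Fin.ext h)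
      simp [upd, hjv, hσjv]
  rw [← key]
  exact (hsym _ (upd_mem (fun _ => hd) hv) σ)

/-- translations commute -/
lemma Tr_comm {n : ℕ} {I : Set ℝ} {f : (Fin n → ℝ) → ℝ} (hn : 2 ≤ n)
    (hmap : ∀ x : Fin n → ℝ, (∀ i, x i ∈ I) → f x ∈ I)
    (hsym : SymmOn n I f) (hassoc : NAssocOn n I f)
    {a b t : ℝ} (ha : a ∈ I) (hb : b ∈ I) (ht : t ∈ I) :
    Tr n f a (Tr n f b t) = Tr n f b (Tr n f a t) := by
  set x : ℕ → ℝ := fun m => if m < n - 1 then a else if m = n - 1 then t else b with hx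
  have hxm : ∀ j, j < 2 * n - 1 → x j ∈ I := by
    intro j _; simp only [hx]; split
    · exact ha
    · split <;> assumption
  have hshift := shift hn hassoc x hxm
  have hinner1 : (fun l : Fin n => x (l : ℕ)) = upd n (fun _ => a) (n - 1) t := by
    funext l
    simp only [hx, upd]
    by_cases h1 : (l : ℕ) = n - 1
    · simp [h1]
    · have h2 : (l : ℕ) < n - 1 := by have := l.isLt; omega
      simp [h1, h2]
  have hinner2 : (fun l : Fin n => x (n - 1 + (l : ℕ))) = upd n (fun _ => b) 0 t := by
    funext l
    simp only [hx, upd]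
    by_cases h1 : (l : ℕ) = 0
    · simp [h1]
    · have h2 : ¬ (n - 1 + (l : ℕ) < n - 1) := by omega
      have h3 : n - 1 + (l : ℕ) ≠ n - 1 := by omega
      simp [h1, h2, h3]
  have eL : (fun j : Fin n => if (j : ℕ) = 0 then f (fun l : Fin n => x (l : ℕ))
      else x ((j : ℕ) + n - 1)) = upd n (fun _ => b) 0 (f (upd n (fun _ => a) (n - 1) t)) := by
    funext j
    rw [hinner1]
    simp only [upd, hx]
    by_cases h1 : (j : ℕ) = 0
    · simp [h1]
    · have h2 : ¬ ((j : ℕ) + n - 1 < n - 1) := by omega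
      have h3 : (j : ℕ) + n - 1 ≠ n - 1 := by omega
      simp [h1, h2, h3]
  have eR : (fun j : Fin n => if (j : ℕ) = n - 1 then f (fun l : Fin n => x (n - 1 + (l : ℕ)))
      else x (j : ℕ)) = upd n (fun _ => a) (n - 1) (f (upd n (fun _ => b) 0 t)) := by
    funext j
    rw [hinner2]
    simp only [upd, hx]
    by_cases h1 : (j : ℕ) = n - 1
    · simp [h1]
    · have h2 : (j : ℕ) < n - 1 := by have := j.isLt; omega
      simp [h1, h2]
  rw [eL, eR] at hshift
  have hTat : f (upd n (fun _ => a) (n - 1) t) = Tr n f a t :=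
    (swap0last hn hsym ha ht).symm
  have hTbt : Tr n f b t ∈ I := Tr_mem hmap hb ht
  have hTat' : Tr n f a t ∈ I := Tr_mem hmap ha ht
  calc Tr n f a (Tr n f b t)
      = f (upd n (fun _ => a) (n - 1) (Tr n f b t)) := swap0last hn hsym ha hTbt
    _ = f (upd n (fun _ => a) (n - 1) (f (upd n (fun _ => b) 0 t))) := rfl
    _ = f (upd n (fun _ => b) 0 (f (upd n (fun _ => a) (n - 1) t))) := hshift.symm
    _ = Tr n f b (Tr n f a t) := by rw [hTat]; rfl

/-- translating by `Tr c d` equals `n-1` translations by `c` after one by `d`. -/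
lemma Tr_absorb {n : ℕ} {I : Set ℝ} {f : (Fin n → ℝ) → ℝ} (hn : 2 ≤ n)
    (hmap : ∀ x : Fin n → ℝ, (∀ i, x i ∈ I) → f x ∈ I)
    (hsym : SymmOn n I f) (hassoc : NAssocOn n I f)
    {c d u : ℝ} (hc : c ∈ I) (hd : d ∈ I) (hu : u ∈ I) :
    Tr n f (Tr n f c d) u = (Tr n f c)^[n - 1] (Tr n f d u) := by
  set e := Tr n f c d with he
  have hem : e ∈ I := Tr_mem hmap hc hd
  set tupK : ℕ → Fin n → ℝ := fun m j => if (j : ℕ) = 0 then u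
      else if (j : ℕ) ≤ m then d else e with htupK
  have htm : ∀ m i, tupK m i ∈ I := by
    intro m i; simp only [htupK]
    split
    · exact hu
    · split <;> assumption
  have H : ∀ m, m ≤ n - 1 → Tr n f e u = (Tr n f c)^[m] (f (tupK m)) := by
    intro m
    induction m with
    | zero =>
      intro _
      have : tupK 0 = upd n (fun _ => e) 0 u := by
        funext j
        simp only [htupK, upd]
        by_cases h1 : (j : ℕ) = 0
        · simp [h1]
        · have h2 : ¬ ((j : ℕ) ≤ 0) := by omega
          simp [h1, h2]
      rw [this]
      rfl
    | succ m ih =>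
      intro hm1
      have hm : m ≤ n - 1 := by omega
      have hmn2 : m ≤ n - 2 := by omega
      set x : ℕ → ℝ := fun l => if l = 0 then u else if l ≤ m then d
          else if l < n - 1 then e else if l = n - 1 then d else c with hx
      have hxm : ∀ j, j < 2 * n - 1 → x j ∈ I := by
        intro j _; simp only [hx]
        split
        · exact hu
        · split
          · exact hd
          · split
            · exact hem
            · split <;> assumption
      have hshift := shift hn hassoc x hxm
      have hinner2 : (fun l : Fin n => x (n - 1 + (l : ℕ))) = upd n (fun _ => c) 0 d := by
        funext l
        simp only [hx, upd]
        by_cases h1 : (l : ℕ) = 0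
        · have e1 : n - 1 + (l : ℕ) = n - 1 := by omega
          have e2 : n - 1 ≠ 0 := by omega
          have e3 : ¬ (n - 1 ≤ m) := by omega
          have e4 : ¬ (n - 1 < n - 1) := by omega
          simp [e1, e2, e3, e4, h1]
        · have e1 : n - 1 + (l : ℕ) ≠ 0 := by omega
          have e2 : ¬ (n - 1 + (l : ℕ) ≤ m) := by omega
          have e3 : ¬ (n - 1 + (l : ℕ) < n - 1) := by omega
          have e4 : n - 1 + (l : ℕ) ≠ n - 1 := by omega
          simp [e1, e2, e3, e4, h1]
      have eR : (fun j : Fin n => if (j : ℕ) = n - 1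
          then f (fun l : Fin n => x (n - 1 + (l : ℕ))) else x (j : ℕ)) = tupK m := by
        funext j
        rw [hinner2]
        simp only [hx, htupK]
        by_cases h1 : (j : ℕ) = n - 1
        · have e2 : n - 1 ≠ 0 := by omega
          have e3 : ¬ (n - 1 ≤ m) := by omega
          simp only [h1, e2, e3, if_false, if_true, if_neg, if_pos]
          rw [he]; exact rfl
        · have hjlt : (j : ℕ) < n - 1 := by have := j.isLt; omega
          by_cases h2 : (j : ℕ) = 0
          · have e0 : ¬ ((0:ℕ) = n - 1) := by omega
            simp [h1, h2, e0]
          · by_cases h3 : (j : ℕ) ≤ m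
            · simp [h1, h2, h3]
            · simp [h1, h2, h3, hjlt]
      set y : Fin n → ℝ := fun l => if (l : ℕ) = 0 then u else if (l : ℕ) ≤ m then d
          else if (l : ℕ) < n - 1 then e else d with hy
      have hym : ∀ i, y i ∈ I := by
        intro i; simp only [hy]
        split
        · exact hu
        · split
          · exact hd
          · split <;> assumption
      have hinner1 : (fun l : Fin n => x (l : ℕ)) = y := by
        funext l
        simp only [hx, hy]
        by_cases h1 : (l : ℕ) = 0
        · simp [h1]
        · by_cases h2 : (l : ℕ) ≤ m
          · simp [h1, h2]
          · by_cases h3 : (l : ℕ) < n - 1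
            · simp [h1, h2, h3]
            · have h4 : (l : ℕ) = n - 1 := by have := l.isLt; omega
              simp [h1, h2, h3, h4]
      have eL : (fun j : Fin n => if (j : ℕ) = 0 then f (fun l : Fin n => x (l : ℕ))
          else x ((j : ℕ) + n - 1)) = upd n (fun _ => c) 0 (f y) := by
        funext j
        rw [hinner1]
        simp only [hx, upd]
        by_cases h1 : (j : ℕ) = 0
        · simp [h1]
        · have e1 : (j : ℕ) + n - 1 ≠ 0 := by omega
          have e2 : ¬ ((j : ℕ) + n - 1 ≤ m) := by omega
          have e3 : ¬ ((j : ℕ) + n - 1 < n - 1) := by omega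
          have e4 : (j : ℕ) + n - 1 ≠ n - 1 := by omega
          simp [h1, e1, e2, e3, e4]
      have hswap : f y = f (tupK (m + 1)) := by
        have hm1n : m + 1 < n := by omega
        have hn1n : n - 1 < n := by omega
        set σ : Equiv.Perm (Fin n) := Equiv.swap ⟨m + 1, hm1n⟩ ⟨n - 1, hn1n⟩ with hσ
        have hcomp : tupK (m + 1) ∘ σ = y := by
          funext l
          by_cases h1 : l = (⟨m + 1, hm1n⟩ : Fin n)
          · subst h1
            simp only [Function.comp_apply, hσ, Equiv.swap_apply_left, htupK, hy]
            by_cases h2 : m + 1 = n - 1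
            · have e1 : n - 1 ≠ 0 := by omega
              have e2 : ¬ (n - 1 ≤ m) := by omega
              have e3 : n - 1 ≤ m + 1 := by omega
              have e4 : ¬ (n - 1 < n - 1) := by omega
              simp [e1, e2, e3, e4, ← h2]
            · have e1 : n - 1 ≠ 0 := by omega
              have e2 : ¬ (n - 1 ≤ m + 1) := by omega
              have e3 : m + 1 ≠ 0 := by omega
              have e4 : ¬ (m + 1 ≤ m) := by omega
              have e5 : m + 1 < n - 1 := by omega
              simp [e1, e2, e3, e4, e5]
          · by_cases h2 : l = (⟨n - 1, hn1n⟩ : Fin n)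
            · subst h2
              simp only [Function.comp_apply, hσ, Equiv.swap_apply_right, htupK, hy]
              have e1 : m + 1 ≠ 0 := by omega
              have e2 : m + 1 ≤ m + 1 := le_rfl
              have e3 : n - 1 ≠ 0 := by omega
              have e4 : ¬ (n - 1 ≤ m) := by omega
              have e5 : ¬ (n - 1 < n - 1) := by omega
              simp [e1, e2, e3, e4, e5]
            · have hσl : σ l = l := by
                simp only [hσ]
                exact Equiv.swap_apply_of_ne_of_ne h1 h2
              simp only [Function.comp_apply, hσl, htupK, hy]
              have hv1 : (l : ℕ) ≠ m + 1 := fun h => h1 (Fin.ext h)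
              have hv2 : (l : ℕ) ≠ n - 1 := fun h => h2 (Fin.ext h)
              by_cases e1 : (l : ℕ) = 0
              · simp [e1]
              · by_cases e2 : (l : ℕ) ≤ m
                · have e3 : (l : ℕ) ≤ m + 1 := by omega
                  simp [e1, e2, e3]
                · have e3 : ¬ ((l : ℕ) ≤ m + 1) := by omega
                  have e4 : (l : ℕ) < n - 1 := by have := l.isLt; omega
                  simp [e1, e2, e3, e4]
        rw [← hcomp]
        exact hsym _ (htm (m + 1)) σ
      rw [eL, eR] at hshift
      have step : f (tupK m) = Tr n f c (f (tupK (m + 1))) := by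
        rw [← hshift, hswap]
        rfl
      rw [ih hm, step, ← Function.iterate_succ_apply]
  have hfinal := H (n - 1) le_rfl
  have : tupK (n - 1) = upd n (fun _ => d) 0 u := by
    funext j
    simp only [htupK, upd]
    by_cases h1 : (j : ℕ) = 0
    · simp [h1]
    · have h2 : (j : ℕ) ≤ n - 1 := by have := j.isLt; omega
      simp [h1, h2]
  rw [this] at hfinal
  exact hfinal

lemma Tr_pow {n : ℕ} {I : Set ℝ} {f : (Fin n → ℝ) → ℝ} (hn : 2 ≤ n)
    (hmap : ∀ x : Fin n → ℝ, (∀ i, x i ∈ I) → f x ∈ I)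
    (hsym : SymmOn n I f) (hassoc : NAssocOn n I f)
    {c : ℝ} (hc : c ∈ I) (s : ℕ) :
    ∀ d ∈ I, ∀ u ∈ I,
      Tr n f ((Tr n f c)^[s] d) u = (Tr n f c)^[s * (n - 1)] (Tr n f d u) := by
  induction s with
  | zero => intro d _ u _; simp
  | succ s ih =>
    intro d hd u hu
    rw [Function.iterate_succ_apply, ih (Tr n f c d) (Tr_mem hmap hc hd) u hu,
      Tr_absorb hn hmap hsym hassoc hc hd hu, ← Function.iterate_add_apply]
    congr 1
    ring

lemma Tr_lt {n : ℕ} {I : Set ℝ} {f : (Fin n → ℝ) → ℝ}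
    (h0 : ∀ y : Fin n → ℝ, (∀ i, y i ∈ I) → ∀ t ∈ I, ∀ t' ∈ I, t < t' →
      f (upd n y 0 t) < f (upd n y 0 t'))
    {d : ℝ} (hd : d ∈ I) {u v : ℝ} (hu : u ∈ I) (hv : v ∈ I) (huv : u < v) :
    Tr n f d u < Tr n f d v :=
  h0 (fun _ => d) (fun _ => hd) u hu v hv huv

lemma Tr_iter_lt {n : ℕ} {I : Set ℝ} {f : (Fin n → ℝ) → ℝ}
    (hmap : ∀ x : Fin n → ℝ, (∀ i, x i ∈ I) → f x ∈ I)
    (h0 : ∀ y : Fin n → ℝ, (∀ i, y i ∈ I) → ∀ t ∈ I, ∀ t' ∈ I, t < t' →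
      f (upd n y 0 t) < f (upd n y 0 t'))
    {d : ℝ} (hd : d ∈ I) (s : ℕ) {u v : ℝ} (hu : u ∈ I) (hv : v ∈ I) (huv : u < v) :
    (Tr n f d)^[s] u < (Tr n f d)^[s] v := by
  induction s with
  | zero => simpa
  | succ s ih =>
    rw [Function.iterate_succ_apply', Function.iterate_succ_apply']
    exact Tr_lt h0 hd (Tr_iter_mem hmap hd hu s) (Tr_iter_mem hmap hd hv s) ih

lemma Tr_comm_iter1 {n : ℕ} {I : Set ℝ} {f : (Fin n → ℝ) → ℝ} (hn : 2 ≤ n)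
    (hmap : ∀ x : Fin n → ℝ, (∀ i, x i ∈ I) → f x ∈ I)
    (hsym : SymmOn n I f) (hassoc : NAssocOn n I f)
    {a b : ℝ} (ha : a ∈ I) (hb : b ∈ I) (t : ℕ) :
    ∀ u ∈ I, Tr n f a ((Tr n f b)^[t] u) = (Tr n f b)^[t] (Tr n f a u) := by
  induction t with
  | zero => intro u _; rfl
  | succ t ih =>
    intro u hu
    rw [Function.iterate_succ_apply', Function.iterate_succ_apply',
      Tr_comm hn hmap hsym hassoc ha hb (Tr_iter_mem hmap hb hu t), ih u hu]

lemma cmp_iter {n : ℕ} {I : Set ℝ} {f : (Fin n → ℝ) → ℝ}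
    (hmap : ∀ x : Fin n → ℝ, (∀ i, x i ∈ I) → f x ∈ I)
    (hsym : SymmOn n I f)
    (h0 : ∀ y : Fin n → ℝ, (∀ i, y i ∈ I) → ∀ t ∈ I, ∀ t' ∈ I, t < t' →
      f (upd n y 0 t) < f (upd n y 0 t'))
    {a b : ℝ} (ha : a ∈ I) (hb : b ∈ I) (hab : a < b) (hn : 2 ≤ n) (m : ℕ) :
    (Tr n f a)^[m] a < (Tr n f b)^[m] b := by
  induction m with
  | zero => simpa
  | succ m ih =>
    rw [Function.iterate_succ_apply', Function.iterate_succ_apply']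
    have hA : (Tr n f a)^[m] a ∈ I := Tr_iter_mem hmap ha ha m
    have hB : (Tr n f b)^[m] b ∈ I := Tr_iter_mem hmap hb hb m
    exact mono_lt hsym h0 (upd_mem (fun _ => ha) hA) (upd_mem (fun _ => hb) hB)
      (fun i => by
        simp only [upd]
        split
        · exact ih.le
        · exact hab.le)
      (show (0:ℕ) < n by omega)
      (by simp [upd, ih])

lemma cons_rep_getD {n : ℕ} (hn : 2 ≤ n) (w d : ℝ) (i : Fin n) :
    (w :: List.replicate (n - 1) d).getD (i : ℕ) 0 = if (i : ℕ) = 0 then w else d := by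
  rcases i with ⟨i, hi⟩
  match i with
  | 0 => simp [List.getD]
  | (i + 1) =>
    have h : i < n - 1 := by omega
    simp [List.getD, List.getElem?_replicate, h]

lemma g_block {n : ℕ} {f : (Fin n → ℝ) → ℝ} {g : List ℝ → ℝ} (hn : 2 ≤ n)
    (hgn : ∀ l : List ℝ, l.length = n → g l = f (fun i : Fin n => l.getD (i : ℕ) 0))
    (hgrec : ∀ l r : List ℝ, l ≠ [] → l.length % (n - 1) = 1 % (n - 1) →
      r.length = n - 1 → g (l ++ r) = g (g l :: r))
    (d : ℝ) (s : ℕ) :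
    ∀ l : List ℝ, l ≠ [] → l.length % (n - 1) = 1 % (n - 1) →
      g (l ++ List.replicate (s * (n - 1)) d) = (Tr n f d)^[s] (g l) := by
  induction s with
  | zero => intro l _ _; simp
  | succ s ih =>
    intro l hl hlen
    have e1 : (s + 1) * (n - 1) = s * (n - 1) + (n - 1) := by ring
    rw [e1, List.replicate_add, ← List.append_assoc]
    have hne : l ++ List.replicate (s * (n - 1)) d ≠ [] := by
      intro h
      exact hl (List.append_eq_nil_iff.mp h).1
    have hlen2 : (l ++ List.replicate (s * (n - 1)) d).length % (n - 1) = 1 % (n - 1) := by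
      rw [List.length_append, List.length_replicate, Nat.add_mul_mod_self_right]
      exact hlen
    rw [hgrec _ _ hne hlen2 (by simp)]
    have hlc : (g (l ++ List.replicate (s * (n - 1)) d) :: List.replicate (n - 1) d).length
        = n := by simp; omega
    rw [hgn _ hlc]
    have htup : (fun i : Fin n =>
        (g (l ++ List.replicate (s * (n - 1)) d) :: List.replicate (n - 1) d).getD (i : ℕ) 0)
        = upd n (fun _ => d) 0 (g (l ++ List.replicate (s * (n - 1)) d)) := by
      funext i
      rw [cons_rep_getD hn]
      rfl
    rw [htup]
    show Tr n f d (g (l ++ List.replicate (s * (n - 1)) d)) = _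
    rw [ih l hl hlen]
    exact (Function.iterate_succ_apply' _ _ _).symm

lemma g_single {n : ℕ} {f : (Fin n → ℝ) → ℝ} {g : List ℝ → ℝ} (hn : 2 ≤ n)
    (hg1 : ∀ a : ℝ, g [a] = a)
    (hgn : ∀ l : List ℝ, l.length = n → g l = f (fun i : Fin n => l.getD (i : ℕ) 0))
    (hgrec : ∀ l r : List ℝ, l ≠ [] → l.length % (n - 1) = 1 % (n - 1) →
      r.length = n - 1 → g (l ++ r) = g (g l :: r))
    (d w : ℝ) (s : ℕ) :
    g (w :: List.replicate (s * (n - 1)) d) = (Tr n f d)^[s] w := by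
  have := g_block (f := f) hn hgn hgrec d s [w] (by simp) (by simp)
  rw [List.singleton_append] at this
  rw [this, hg1]

lemma iff_of_tri {a b P Q : ℝ} (h1 : a < b → P < Q) (h2 : a = b → P = Q)
    (h3 : b < a → Q < P) :
    (b < a ↔ Q < P) ∧ (a < b ↔ P < Q) ∧ (a = b ↔ P = Q) := by
  refine ⟨⟨h3, fun h => ?_⟩, ⟨h1, fun h => ?_⟩, ⟨h2, fun h => ?_⟩⟩
  · rcases lt_trichotomy a b with h' | h' | h'
    · exact absurd (h1 h') (by linarith)
    · exact absurd (h2 h') (by linarith)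
    · exact h'
  · rcases lt_trichotomy a b with h' | h' | h'
    · exact h'
    · exact absurd (h2 h') (by linarith)
    · exact absurd (h3 h') (by linarith)
  · rcases lt_trichotomy a b with h' | h' | h'
    · exact absurd (h1 h') (by linarith)
    · exact h'
    · exact absurd (h3 h') (by linarith)

end Stmt13

/-- Claim 4: for `x ∈ I` and `j, k, p, q ∈ ℕ` with `j+1, k, p, q+1 ∈ Aₙ`,
`g(c^p) > g(x c^q)` iff `g(c^{kp}) > g(x^k c^{kq})` iff `g(c^{p+j}) > g(x c^{q+j})`,
and the same equivalences hold with `<` or `=` in place of `>`. -/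

theorem stmt_13 (n : ℕ) (hn : 2 ≤ n) (I : Set ℝ) (hI : I.OrdConnected)
    (hne : ∃ a ∈ I, ∃ b ∈ I, a ≠ b)
    (f : (Fin n → ℝ) → ℝ)
    (hmap : ∀ x : Fin n → ℝ, (∀ i, x i ∈ I) → f x ∈ I)
    (hcont : ContinuousOn f {x | ∀ i, x i ∈ I})
    (hsym : SymmOn n I f) (hcanc : CancOn n I f) (hassoc : NAssocOn n I f)
    (g : List ℝ → ℝ)
    -- g is the n-associative extension of f with g₁ = id:
    (hg1 : ∀ a : ℝ, g [a] = a)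
    (hgn : ∀ l : List ℝ, l.length = n → g l = f (fun i : Fin n => l.getD (i : ℕ) 0))
    (hgrec : ∀ l r : List ℝ, l ≠ [] → l.length % (n - 1) = 1 % (n - 1) →
      r.length = n - 1 → g (l ++ r) = g (g l :: r))
    (c : ℝ) (hc : c ∈ I) (hcf : c < f (fun _ => c))
    :
    ∀ x ∈ I, ∀ j k p q : ℕ,
      (j + 1) % (n - 1) = 1 % (n - 1) → k % (n - 1) = 1 % (n - 1) → 1 ≤ k →
      p % (n - 1) = 1 % (n - 1) → 1 ≤ p → q % (n - 1) = 0 →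
      ((g (List.replicate p c) > g (x :: List.replicate q c) ↔
          g (List.replicate (k * p) c) >
            g (List.replicate k x ++ List.replicate (k * q) c)) ∧
        (g (List.replicate p c) > g (x :: List.replicate q c) ↔
          g (List.replicate (p + j) c) > g (x :: List.replicate (q + j) c))) ∧
      ((g (List.replicate p c) < g (x :: List.replicate q c) ↔
          g (List.replicate (k * p) c) <
            g (List.replicate k x ++ List.replicate (k * q) c)) ∧
        (g (List.replicate p c) < g (x :: List.replicate q c) ↔
          g (List.replicate (p + j) c) < g (x :: List.replicate (q + j) c))) ∧
      ((g (List.replicate p c) = g (x :: List.replicate q c) ↔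
          g (List.replicate (k * p) c) =
            g (List.replicate k x ++ List.replicate (k * q) c)) ∧
        (g (List.replicate p c) = g (x :: List.replicate q c) ↔
          g (List.replicate (p + j) c) = g (x :: List.replicate (q + j) c))) := by
  intro x hx j k p q hj hk hk1 hp hp1 hq
  have h0 := Stmt13.slot0 hn hI hne hmap hcont hcanc hassoc
  -- numeric decompositions
  obtain ⟨j', hj'⟩ : ∃ t, j = (n - 1) * t := by
    have h1 : Nat.ModEq (n - 1) 1 (j + 1) := hj.symm
    have h2 : (n - 1) ∣ (j + 1 - 1) := (Nat.modEq_iff_dvd' (by omega)).mp h1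
    exact (by simpa using h2 : (n - 1) ∣ j)
  obtain ⟨p', hp'⟩ : ∃ t, p = (n - 1) * t + 1 := by
    have h1 : Nat.ModEq (n - 1) 1 p := hp.symm
    have h2 : (n - 1) ∣ (p - 1) := (Nat.modEq_iff_dvd' hp1).mp h1
    obtain ⟨t, ht⟩ := h2
    exact ⟨t, by omega⟩
  obtain ⟨k', hk'⟩ : ∃ t, k = (n - 1) * t + 1 := by
    have h1 : Nat.ModEq (n - 1) 1 k := hk.symm
    have h2 : (n - 1) ∣ (k - 1) := (Nat.modEq_iff_dvd' hk1).mp h1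
    obtain ⟨t, ht⟩ := h2
    exact ⟨t, by omega⟩
  obtain ⟨q', hq'⟩ : ∃ t, q = (n - 1) * t := Nat.dvd_of_mod_eq_zero hq
  -- the `g`-values as iterates of translations
  have hgr : ∀ (w : ℝ) (s : ℕ),
      g (List.replicate (s * (n - 1) + 1) w) = (Stmt13.Tr n f w)^[s] w := by
    intro w s
    have e : List.replicate (s * (n - 1) + 1) w = w :: List.replicate (s * (n - 1)) w := by
      rw [Nat.add_comm, List.replicate_add, List.replicate_one, List.singleton_append]
    rw [e]
    exact Stmt13.g_single (f := f) hn hg1 hgn hgrec w w s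
  have eq1 : g (List.replicate p c) = (Stmt13.Tr n f c)^[p'] c := by
    rw [show p = p' * (n - 1) + 1 by rw [hp']; ring]
    exact hgr c p'
  have eq2 : g (x :: List.replicate q c) = (Stmt13.Tr n f c)^[q'] x := by
    rw [show q = q' * (n - 1) by rw [hq']; ring]
    exact Stmt13.g_single (f := f) hn hg1 hgn hgrec c x q'
  have eq3 : g (List.replicate (p + j) c) = (Stmt13.Tr n f c)^[p' + j'] c := by
    rw [show p + j = (p' + j') * (n - 1) + 1 by rw [hp', hj']; ring]
    exact hgr c (p' + j')
  have eq4 : g (x :: List.replicate (q + j) c) = (Stmt13.Tr n f c)^[q' + j'] x := by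
    rw [show q + j = (q' + j') * (n - 1) by rw [hq', hj']; ring]
    exact Stmt13.g_single (f := f) hn hg1 hgn hgrec c x (q' + j')
  have eq5 : g (List.replicate (k * p) c) = (Stmt13.Tr n f c)^[k' * p + p'] c := by
    rw [show k * p = (k' * p + p') * (n - 1) + 1 by rw [hk', hp']; ring]
    exact hgr c (k' * p + p')
  have hrepk : g (List.replicate k x) = (Stmt13.Tr n f x)^[k'] x := by
    rw [show k = k' * (n - 1) + 1 by rw [hk']; ring]
    exact hgr x k'
  have eq6 : g (List.replicate k x ++ List.replicate (k * q) c)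
      = (Stmt13.Tr n f c)^[k * q'] ((Stmt13.Tr n f x)^[k'] x) := by
    have h1 := Stmt13.g_block (f := f) hn hgn hgrec c (k * q') (List.replicate k x)
      (by simp [List.replicate_eq_nil_iff]; omega)
      (by rw [List.length_replicate]; exact hk)
    rw [show (k * q') * (n - 1) = k * q by rw [hq', hk']; ring] at h1
    rw [h1, hrepk]
  -- memberships
  have ha : (Stmt13.Tr n f c)^[p'] c ∈ I := Stmt13.Tr_iter_mem hmap hc hc p'
  have hb : (Stmt13.Tr n f c)^[q'] x ∈ I := Stmt13.Tr_iter_mem hmap hc hx q'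
  -- structural identities for the translations by a := Tc^[p'] c and b := Tc^[q'] x
  have idA : ∀ u ∈ I, Stmt13.Tr n f ((Stmt13.Tr n f c)^[p'] c) u = (Stmt13.Tr n f c)^[p] u := by
    intro u hu
    rw [Stmt13.Tr_pow hn hmap hsym hassoc hc p' c hc u hu,
      show p = p' * (n - 1) + 1 by rw [hp']; ring, Function.iterate_succ_apply]
  have idB : ∀ u ∈ I, Stmt13.Tr n f ((Stmt13.Tr n f c)^[q'] x) u = (Stmt13.Tr n f c)^[q] (Stmt13.Tr n f x u) := by
    intro u hu
    rw [Stmt13.Tr_pow hn hmap hsym hassoc hc q' x hx u hu,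
      show q' * (n - 1) = q by rw [hq']; ring]
  have claimA : ∀ m : ℕ, (Stmt13.Tr n f ((Stmt13.Tr n f c)^[p'] c))^[m] ((Stmt13.Tr n f c)^[p'] c)
      = (Stmt13.Tr n f c)^[m * p] ((Stmt13.Tr n f c)^[p'] c) := by
    intro m
    induction m with
    | zero => simp
    | succ m ih =>
      rw [Function.iterate_succ_apply', ih,
        idA _ (Stmt13.Tr_iter_mem hmap hc ha (m * p)),
        ← Function.iterate_add_apply, show p + m * p = (m + 1) * p by ring]
  have claimB : ∀ m : ℕ, (Stmt13.Tr n f ((Stmt13.Tr n f c)^[q'] x))^[m] ((Stmt13.Tr n f c)^[q'] x)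
      = (Stmt13.Tr n f c)^[m * q + q'] ((Stmt13.Tr n f x)^[m] x) := by
    intro m
    induction m with
    | zero => simp
    | succ m ih =>
      rw [Function.iterate_succ_apply', ih,
        idB _ (Stmt13.Tr_iter_mem hmap hc (Stmt13.Tr_iter_mem hmap hx hx m) (m * q + q')),
        Stmt13.Tr_comm_iter1 hn hmap hsym hassoc hx hc (m * q + q') _
          (Stmt13.Tr_iter_mem hmap hx hx m),
        ← Function.iterate_succ_apply' (Stmt13.Tr n f x) m x,
        ← Function.iterate_add_apply, show q + (m * q + q') = (m + 1) * q + q' by ring]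
  have ekp : g (List.replicate (k * p) c)
      = (Stmt13.Tr n f ((Stmt13.Tr n f c)^[p'] c))^[k'] ((Stmt13.Tr n f c)^[p'] c) := by
    rw [eq5, Function.iterate_add_apply, ← claimA k']
  have ekx : g (List.replicate k x ++ List.replicate (k * q) c)
      = (Stmt13.Tr n f ((Stmt13.Tr n f c)^[q'] x))^[k'] ((Stmt13.Tr n f c)^[q'] x) := by
    rw [eq6, show k * q' = k' * q + q' by rw [hk', hq']; ring, ← claimB k']
  -- comparison transfers
  have hK1 : (Stmt13.Tr n f c)^[p'] c < (Stmt13.Tr n f c)^[q'] x →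
      (Stmt13.Tr n f ((Stmt13.Tr n f c)^[p'] c))^[k'] ((Stmt13.Tr n f c)^[p'] c)
        < (Stmt13.Tr n f ((Stmt13.Tr n f c)^[q'] x))^[k'] ((Stmt13.Tr n f c)^[q'] x) := fun h =>
    Stmt13.cmp_iter hmap hsym h0 ha hb h hn k'
  have hK2 : (Stmt13.Tr n f c)^[p'] c = (Stmt13.Tr n f c)^[q'] x →
      (Stmt13.Tr n f ((Stmt13.Tr n f c)^[p'] c))^[k'] ((Stmt13.Tr n f c)^[p'] c)
        = (Stmt13.Tr n f ((Stmt13.Tr n f c)^[q'] x))^[k'] ((Stmt13.Tr n f c)^[q'] x) := fun h => by rw [h]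
  have hK3 : (Stmt13.Tr n f c)^[q'] x < (Stmt13.Tr n f c)^[p'] c →
      (Stmt13.Tr n f ((Stmt13.Tr n f c)^[q'] x))^[k'] ((Stmt13.Tr n f c)^[q'] x)
        < (Stmt13.Tr n f ((Stmt13.Tr n f c)^[p'] c))^[k'] ((Stmt13.Tr n f c)^[p'] c) := fun h =>
    Stmt13.cmp_iter hmap hsym h0 hb ha h hn k'
  have hJ1 : (Stmt13.Tr n f c)^[p'] c < (Stmt13.Tr n f c)^[q'] x →
      (Stmt13.Tr n f c)^[p' + j'] c < (Stmt13.Tr n f c)^[q' + j'] x := by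
    intro h
    rw [show p' + j' = j' + p' by ring, show q' + j' = j' + q' by ring,
      Function.iterate_add_apply, Function.iterate_add_apply]
    exact Stmt13.Tr_iter_lt hmap h0 hc j' ha hb h
  have hJ2 : (Stmt13.Tr n f c)^[p'] c = (Stmt13.Tr n f c)^[q'] x →
      (Stmt13.Tr n f c)^[p' + j'] c = (Stmt13.Tr n f c)^[q' + j'] x := by
    intro h
    rw [show p' + j' = j' + p' by ring, show q' + j' = j' + q' by ring,
      Function.iterate_add_apply, Function.iterate_add_apply, h]
  have hJ3 : (Stmt13.Tr n f c)^[q'] x < (Stmt13.Tr n f c)^[p'] c →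
      (Stmt13.Tr n f c)^[q' + j'] x < (Stmt13.Tr n f c)^[p' + j'] c := by
    intro h
    rw [show p' + j' = j' + p' by ring, show q' + j' = j' + q' by ring,
      Function.iterate_add_apply, Function.iterate_add_apply]
    exact Stmt13.Tr_iter_lt hmap h0 hc j' hb ha h
  obtain ⟨G3, G1, G2⟩ := Stmt13.iff_of_tri hK1 hK2 hK3
  obtain ⟨H3, H1, H2⟩ := Stmt13.iff_of_tri hJ1 hJ2 hJ3
  rw [eq1, eq2, eq3, eq4, ekp, ekx]
  exact ⟨⟨G3, H3⟩, ⟨G1, H1⟩, ⟨G2, H2⟩⟩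
end
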